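/- Suppose in addition that [𝔔]_R = {𝔔} is a singleton (there is a unique fittest strategy). Let (μ(t))_{t≥0} be a solution of the pure selection model with 𝔔 ∈ supp(μ(0)). Then μ(t) → K_𝔔 δ_𝔔 as t → ∞ in the weak* topology, i.e., for every continuous f : Q → ℝ, ∫_Q f dμ(t) → K_𝔔 f(𝔔). -/

import Mathlib

open MeasureTheory Filter Set Topology

noncomputable section

/-- Birth and mortality rates `f₁`, `f₂` on `ℝ × Q` satisfying assumptions (A1)-(A2). -/
structure EGTRates (Q : Type*) [MetricSpace Q] where
  f₁ : ℝ → Q → ℝ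
  f₂ : ℝ → Q → ℝ
  f₁_nonneg : ∀ X q, 0 ≤ f₁ X q
  f₂_nonneg : ∀ X q, 0 ≤ f₂ X q
  f₁_lip : ∀ C : ℝ, ∃ L : ℝ, 0 ≤ L ∧ ∀ q : Q, ∀ X ∈ Set.Icc (-C) C, ∀ Y ∈ Set.Icc (-C) C,
    |f₁ X q - f₁ Y q| ≤ L * |X - Y|
  f₂_lip : ∀ C : ℝ, ∃ L : ℝ, 0 ≤ L ∧ ∀ q : Q, ∀ X ∈ Set.Icc (-C) C, ∀ Y ∈ Set.Icc (-C) C,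
    |f₂ X q - f₂ Y q| ≤ L * |X - Y|
  f₁_anti : ∀ q, AntitoneOn (fun X => f₁ X q) (Set.Ici 0)
  f₂_mono : ∀ q, MonotoneOn (fun X => f₂ X q) (Set.Ici 0)
  f₁_cont : ∀ X, Continuous fun q => f₁ X q
  f₂_cont : ∀ X, Continuous fun q => f₂ X q
  f₂_inf_pos : ∃ ϖ : ℝ, 0 < ϖ ∧ ∀ q, ϖ ≤ f₂ 0 q

namespace EGTRates

variable {Q : Type*} [MetricSpace Q]

/-- The reproductive number `R(X,q) = f₁(X,q)/f₂(X,q)`. -/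
def R (M : EGTRates Q) (X : ℝ) (q : Q) : ℝ := M.f₁ X q / M.f₂ X q

/-- The carrying capacity `K(q)`. -/
def carCap (M : EGTRates Q) (q : Q) : ℝ :=
  if 1 ≤ M.R 0 q then sInf {K : ℝ | 0 ≤ K ∧ M.R K q ≤ 1} else 0

/-- Assumptions (A3)-(A5) relative to a fittest strategy `𝔔` and a least fit strategy `𝔮`. -/
def Assumptions (M : EGTRates Q) (𝔔 𝔮 : Q) : Prop :=
  (∀ q, M.R 0 q ≤ M.R 0 𝔔) ∧ (∀ q, M.R 0 𝔮 ≤ M.R 0 q) ∧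
  (∃ X, 0 ≤ X ∧ M.R X 𝔔 ≤ 1) ∧
  (∀ q qq : Q, ∀ Y : ℝ, 0 ≤ Y →
      (M.R 0 qq < M.R 0 q → M.R Y qq < M.R Y q) ∧
      (M.R 0 q = M.R 0 qq → M.R Y q = M.R Y qq)) ∧
  (1 ≤ M.R 0 𝔔 → M.R (M.carCap 𝔔) 𝔔 = 1 ∧ ∀ x, 0 ≤ x → M.R x 𝔔 = 1 → x = M.carCap 𝔔) ∧
  (1 ≤ M.R 0 𝔮 → M.R (M.carCap 𝔮) 𝔮 = 1 ∧ ∀ x, 0 ≤ x → M.R x 𝔮 = 1 → x = M.carCap 𝔮)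

/-- The class of fittest strategies `[𝔔]_R`. -/
def fittestClass (M : EGTRates Q) (𝔔 : Q) : Set Q := {q | M.R 0 q = M.R 0 𝔔}

end EGTRates

section EGTFacts

variable {Q : Type*} [MetricSpace Q] (M : EGTRates Q)

/-- The net growth rate `g(X,q) = f₁(X,q) - f₂(X,q)`. -/
def EGTRates.g (X : ℝ) (q : Q) : ℝ := M.f₁ X q - M.f₂ X q

variable {ϖ : ℝ}

lemma EGTRates.f₂_lb (hϖ₂ : ∀ q, ϖ ≤ M.f₂ 0 q) {X : ℝ} (hX : 0 ≤ X) (q : Q) : ϖ ≤ M.f₂ X q :=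
  le_trans (hϖ₂ q) (M.f₂_mono q self_mem_Ici hX hX)

lemma EGTRates.f₂_pos (hϖ : 0 < ϖ) (hϖ₂ : ∀ q, ϖ ≤ M.f₂ 0 q) {X : ℝ} (hX : 0 ≤ X) (q : Q) : 0 < M.f₂ X q :=
  lt_of_lt_of_le hϖ (M.f₂_lb hϖ₂ hX q)

lemma EGTRates.R_anti (hϖ : 0 < ϖ) (hϖ₂ : ∀ q, ϖ ≤ M.f₂ 0 q) (q : Q) {X Y : ℝ} (hX : 0 ≤ X) (hXY : X ≤ Y) :
    M.R Y q ≤ M.R X q := by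
  have hY : (0:ℝ) ≤ Y := le_trans hX hXY
  exact div_le_div₀ (M.f₁_nonneg X q) (M.f₁_anti q hX hY hXY)
    (M.f₂_pos hϖ hϖ₂ hX q) (M.f₂_mono q hX hY hXY)

lemma EGTRates.f₁_eq_R_mul (X : ℝ) (q : Q) (h : 0 < M.f₂ X q) :
    M.f₁ X q = M.R X q * M.f₂ X q := by
  rw [EGTRates.R, div_mul_cancel₀]
  exact ne_of_gt h

lemma EGTRates.g_le_neg (hϖ : 0 < ϖ) (hϖ₂ : ∀ q, ϖ ≤ M.f₂ 0 q) {X ω : ℝ} (hX : 0 ≤ X) (hω : 0 ≤ ω) {q : Q}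
    (h : M.R X q ≤ 1 - ω) : M.g X q ≤ -(ω * ϖ) := by
  have h2 := M.f₂_pos hϖ hϖ₂ hX q
  have h3 := M.f₂_lb hϖ₂ hX q
  have h1 : M.f₁ X q ≤ (1 - ω) * M.f₂ X q := by
    rw [M.f₁_eq_R_mul X q h2]
    exact mul_le_mul_of_nonneg_right h h2.le
  have : M.g X q ≤ -(ω * M.f₂ X q) := by
    simp only [EGTRates.g]; nlinarith
  refine le_trans this (by nlinarith)

lemma EGTRates.g_nonpos (hϖ : 0 < ϖ) (hϖ₂ : ∀ q, ϖ ≤ M.f₂ 0 q) {X : ℝ} (hX : 0 ≤ X) {q : Q} (h : M.R X q ≤ 1) :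
    M.g X q ≤ 0 := by
  have := M.g_le_neg hϖ hϖ₂ hX (le_refl (0:ℝ)) (q := q) (by linarith)
  linarith

lemma EGTRates.g_nonneg (hϖ : 0 < ϖ) (hϖ₂ : ∀ q, ϖ ≤ M.f₂ 0 q) {X : ℝ} (hX : 0 ≤ X) {q : Q} (h : 1 ≤ M.R X q) :
    0 ≤ M.g X q := by
  have h2 := M.f₂_pos hϖ hϖ₂ hX q
  have h1 : (1:ℝ) * M.f₂ X q ≤ M.f₁ X q := by
    rw [M.f₁_eq_R_mul X q h2]
    exact mul_le_mul_of_nonneg_right h h2.le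
  simp only [EGTRates.g]; linarith

lemma EGTRates.g_pos (hϖ : 0 < ϖ) (hϖ₂ : ∀ q, ϖ ≤ M.f₂ 0 q) {X : ℝ} (hX : 0 ≤ X) {q : Q}
    (h : 1 < M.R X q) : 0 < M.g X q := by
  have h2 := M.f₂_pos hϖ hϖ₂ hX q
  have h1 : (1:ℝ) * M.f₂ X q < M.R X q * M.f₂ X q := by
    exact mul_lt_mul_of_pos_right h h2
  rw [← M.f₁_eq_R_mul X q h2] at h1
  simp only [EGTRates.g]; linarith

lemma EGTRates.g_eq_zero (hϖ : 0 < ϖ) (hϖ₂ : ∀ q, ϖ ≤ M.f₂ 0 q) {X : ℝ} (hX : 0 ≤ X) {q : Q} (h : M.R X q = 1) :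
    M.g X q = 0 :=
  le_antisymm (M.g_nonpos hϖ hϖ₂ hX h.le) (M.g_nonneg hϖ hϖ₂ hX h.ge)

/-- Lipschitz bound for `g` in the first variable. -/
lemma EGTRates.g_lip (C : ℝ) : ∃ L : ℝ, 0 ≤ L ∧ ∀ q : Q, ∀ X ∈ Icc (-C) C, ∀ Y ∈ Icc (-C) C,
    |M.g X q - M.g Y q| ≤ L * |X - Y| := by
  obtain ⟨L₁, hL₁, h₁⟩ := M.f₁_lip C
  obtain ⟨L₂, hL₂, h₂⟩ := M.f₂_lip C
  refine ⟨L₁ + L₂, by linarith, fun q X hX Y hY => ?_⟩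
  have i₁ := h₁ q X hX Y hY
  have i₂ := h₂ q X hX Y hY
  have : M.g X q - M.g Y q = (M.f₁ X q - M.f₁ Y q) - (M.f₂ X q - M.f₂ Y q) := by
    simp only [EGTRates.g]; ring
  rw [this, add_mul]
  exact le_trans (abs_sub _ _) (by linarith)

lemma EGTRates.g_contq (X : ℝ) : Continuous fun q : Q => M.g X q :=
  (M.f₁_cont X).sub (M.f₂_cont X)

lemma EGTRates.f₁_contX (q : Q) (C : ℝ) : ContinuousOn (fun X => M.f₁ X q) (Icc (-C) C) := by
  obtain ⟨L, hL, h⟩ := M.f₁_lip C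
  intro x hx
  refine Metric.continuousWithinAt_iff.mpr (fun ε hε => ?_)
  refine ⟨ε / (L + 1), by positivity, fun {y} hy hd => ?_⟩
  have := h q y hy x hx
  calc dist (M.f₁ y q) (M.f₁ x q) = |M.f₁ y q - M.f₁ x q| := rfl
    _ ≤ L * |y - x| := this
    _ < ε := by
        have hyx : |y - x| < ε / (L + 1) := hd
        have h0 : 0 ≤ |y - x| := abs_nonneg _
        have h2 : (L + 1) * |y - x| < ε := by
          rw [← lt_div_iff₀' (by positivity : (0:ℝ) < L + 1)]
          exact hyx
        nlinarith

lemma EGTRates.f₂_contX (q : Q) (C : ℝ) : ContinuousOn (fun X => M.f₂ X q) (Icc (-C) C) := by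
  obtain ⟨L, hL, h⟩ := M.f₂_lip C
  intro x hx
  refine Metric.continuousWithinAt_iff.mpr (fun ε hε => ?_)
  refine ⟨ε / (L + 1), by positivity, fun {y} hy hd => ?_⟩
  have := h q y hy x hx
  calc dist (M.f₂ y q) (M.f₂ x q) = |M.f₂ y q - M.f₂ x q| := rfl
    _ ≤ L * |y - x| := this
    _ < ε := by
        have hyx : |y - x| < ε / (L + 1) := hd
        have h0 : 0 ≤ |y - x| := abs_nonneg _
        have h2 : (L + 1) * |y - x| < ε := by
          rw [← lt_div_iff₀' (by positivity : (0:ℝ) < L + 1)]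
          exact hyx
        nlinarith

lemma EGTRates.g_contX (q : Q) (C : ℝ) : ContinuousOn (fun X => M.g X q) (Icc (-C) C) :=
  (M.f₁_contX q C).sub (M.f₂_contX q C)

lemma EGTRates.R_contX (q : Q) (C : ℝ) (hC : 0 ≤ C)
    (hpos : ∀ X ∈ Icc (-C) C, 0 < M.f₂ X q) :
    ContinuousOn (fun X => M.R X q) (Icc (-C) C) :=
  (M.f₁_contX q C).div (M.f₂_contX q C) (fun X hX => ne_of_gt (hpos X hX))

end EGTFacts


section EGTCompact

variable {Q : Type*} [MetricSpace Q] [CompactSpace Q] (M : EGTRates Q)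

/-- Global bound for `g` on `[0,C] × Q`. -/
lemma EGTRates.g_bound (q₀ : Q) (C : ℝ) (hC : 0 ≤ C) :
    ∃ G : ℝ, 0 ≤ G ∧ ∀ q : Q, ∀ X ∈ Icc (0:ℝ) C, |M.g X q| ≤ G := by
  obtain ⟨L, hL, hLip⟩ := M.g_lip C
  have hcont : Continuous fun q : Q => |M.g 0 q| := (M.g_contq 0).abs
  have hne : Nonempty Q := ⟨q₀⟩
  obtain ⟨qm, -, hqm⟩ := isCompact_univ.exists_isMaxOn univ_nonempty hcont.continuousOn
  refine ⟨|M.g 0 qm| + L * C, by positivity, fun q X hX => ?_⟩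
  have h0 : |M.g 0 q| ≤ |M.g 0 qm| := hqm (mem_univ q)
  have hXC : X ∈ Icc (-C) C := ⟨le_trans (by linarith) hX.1, hX.2⟩
  have h1 := hLip q X hXC 0 ⟨by linarith, hC⟩
  have h2 : |M.g X q| ≤ |M.g 0 q| + L * |X - 0| := by
    have := abs_sub_abs_le_abs_sub (M.g X q) (M.g 0 q)
    linarith
  have h3 : |X - 0| ≤ C := by
    rw [sub_zero, abs_of_nonneg hX.1]; exact hX.2
  nlinarith

/-- Uniform continuity of `g` in `q` near a point, uniformly for `X ∈ [0,C]`. -/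
lemma EGTRates.g_unif (𝔔 : Q) (C : ℝ) (hC : 0 ≤ C) {d : ℝ} (hd : 0 < d) :
    ∃ ρ : ℝ, 0 < ρ ∧ ∀ q : Q, dist q 𝔔 < ρ → ∀ X ∈ Icc (0:ℝ) C,
      |M.g X q - M.g X 𝔔| ≤ d := by
  obtain ⟨L, hL, hLip⟩ := M.g_lip C
  set F : ℝ × Q → ℝ := fun p => M.g p.1 p.2 with hF
  set S : Set (ℝ × Q) := Icc (-C) C ×ˢ (univ : Set Q) with hS
  have hScomp : IsCompact S := isCompact_Icc.prod isCompact_univ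
  have hFcont : ContinuousOn F S := by
    rintro ⟨X₀, q₀⟩ hp
    refine Metric.continuousWithinAt_iff.mpr (fun ε hε => ?_)
    have hqc : Continuous fun q : Q => M.g X₀ q := M.g_contq X₀
    obtain ⟨δ₁, hδ₁, hq⟩ := Metric.continuous_iff.mp hqc q₀ (ε/2) (by linarith)
    refine ⟨min δ₁ (ε / (2 * (L + 1))), by positivity, ?_⟩
    rintro ⟨X, q⟩ hmem hdist
    have hd1 : dist (X, q) (X₀, q₀) = max (dist X X₀) (dist q q₀) := rfl
    have hdX : dist X X₀ < ε / (2 * (L + 1)) :=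
      lt_of_le_of_lt (le_trans (le_max_left _ _) (le_of_eq hd1.symm)) (lt_of_lt_of_le hdist (min_le_right _ _))
    have hdq : dist q q₀ < δ₁ :=
      lt_of_le_of_lt (le_trans (le_max_right _ _) (le_of_eq hd1.symm)) (lt_of_lt_of_le hdist (min_le_left _ _))
    have e1 : |M.g X q - M.g X₀ q| ≤ L * |X - X₀| := hLip q X hmem.1 X₀ hp.1
    have e2 : dist (M.g X₀ q) (M.g X₀ q₀) < ε/2 := hq q hdq
    have e2' : |M.g X₀ q - M.g X₀ q₀| < ε/2 := e2
    have e3 : |X - X₀| < ε / (2 * (L + 1)) := hdX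
    have e4 : L * |X - X₀| < ε/2 := by
      have h0 : 0 ≤ |X - X₀| := abs_nonneg _
      have : (L + 1) * |X - X₀| < ε / 2 := by
        rw [← lt_div_iff₀' (by positivity : (0:ℝ) < L + 1)]
        calc |X - X₀| < ε / (2 * (L + 1)) := e3
          _ = ε / 2 / (L + 1) := by field_simp
      nlinarith
    have : dist (F (X, q)) (F (X₀, q₀)) = |M.g X q - M.g X₀ q₀| := rfl
    rw [this]
    calc |M.g X q - M.g X₀ q₀| ≤ |M.g X q - M.g X₀ q| + |M.g X₀ q - M.g X₀ q₀| := abs_sub_le _ _ _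
      _ < ε := by linarith
  have hUC := hScomp.uniformContinuousOn_of_continuous hFcont
  rw [Metric.uniformContinuousOn_iff] at hUC
  obtain ⟨ρ, hρ, hρ'⟩ := hUC d hd
  refine ⟨ρ, hρ, fun q hq X hX => ?_⟩
  have hXm : X ∈ Icc (-C) C := ⟨le_trans (by linarith) hX.1, hX.2⟩
  have h1 : ((X, q) : ℝ × Q) ∈ S := ⟨hXm, mem_univ _⟩
  have h2 : ((X, 𝔔) : ℝ × Q) ∈ S := ⟨hXm, mem_univ _⟩
  have hdp : dist ((X, q) : ℝ × Q) (X, 𝔔) < ρ := by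
    have : dist ((X, q) : ℝ × Q) (X, 𝔔) = max (dist X X) (dist q 𝔔) := rfl
    rw [this, dist_self]
    simpa [max_eq_right dist_nonneg] using hq
  have := hρ' (X, q) h1 (X, 𝔔) h2 hdp
  exact le_of_lt this

/-- The sup of `g X ·` over a nonempty compact set, as a function of `X`. -/
lemma EGTRates.hsup_spec {C : Set Q} (hC : IsCompact C) (hne : C.Nonempty) :
    ∃ h : ℝ → ℝ, (∀ X, ∀ q ∈ C, M.g X q ≤ h X) ∧
      (∀ X c, (∀ q ∈ C, M.g X q ≤ c) → h X ≤ c) ∧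
      (∀ B' L, (∀ q : Q, ∀ X ∈ Icc (-B') B', ∀ Y ∈ Icc (-B') B', |M.g X q - M.g Y q| ≤ L * |X - Y|) →
        ∀ X ∈ Icc (-B') B', ∀ Y ∈ Icc (-B') B', |h X - h Y| ≤ L * |X - Y|) := by
  refine ⟨fun X => sSup ((fun q => M.g X q) '' C), ?_, ?_, ?_⟩
  · intro X q hq
    refine le_csSup ?_ (mem_image_of_mem _ hq)
    exact (hC.image_of_continuousOn (M.g_contq X).continuousOn).bddAbove
  · intro X c hc
    refine csSup_le (hne.image _) ?_
    rintro y ⟨q, hq, rfl⟩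
    exact hc q hq
  · intro B' L hLip X hX Y hY
    have key : ∀ U V : ℝ, U ∈ Icc (-B') B' → V ∈ Icc (-B') B' →
        sSup ((fun q => M.g U q) '' C) - sSup ((fun q => M.g V q) '' C) ≤ L * |U - V| := by
      intro U V hU hV
      rw [sub_le_iff_le_add]
      refine csSup_le (hne.image _) ?_
      rintro y ⟨q, hq, rfl⟩
      have h1 := hLip q U hU V hV
      have h2 : M.g V q ≤ sSup ((fun q => M.g V q) '' C) := by
        refine le_csSup ?_ (mem_image_of_mem _ hq)
        exact (hC.image_of_continuousOn (M.g_contq V).continuousOn).bddAbove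
      have := abs_le.mp h1
      linarith
    have k1 := key X Y hX hY
    have k2 := key Y X hY hX
    rw [abs_sub_comm] at k2
    rw [abs_le]
    constructor <;> linarith [abs_nonneg (X - Y), k1, k2]

end EGTCompact


section Helpers

variable {f f' β : ℝ → ℝ} {a T b c : ℝ}

lemma contOn_of_hasDeriv (hd : ∀ t ∈ Ici (0:ℝ), HasDerivWithinAt f (f' t) (Ici 0) t) :
    ContinuousOn f (Ici 0) := fun t ht => (hd t ht).continuousWithinAt

lemma hasDerivAt_of_pos (hd : ∀ t ∈ Ici (0:ℝ), HasDerivWithinAt f (f' t) (Ici 0) t)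
    {t : ℝ} (ht : 0 < t) : HasDerivAt f (f' t) t :=
  (hd t (le_of_lt ht)).hasDerivAt (Ici_mem_nhds ht)

/-- Antitone on [a,T] from derivative bound on values. -/
lemma anti_on_of_deriv (hd : ∀ t ∈ Ici (0:ℝ), HasDerivWithinAt f (f' t) (Ici 0) t)
    (ha : 0 ≤ a) (h : ∀ t, t ∈ Ioo a T → f' t ≤ 0) : AntitoneOn f (Icc a T) := by
  have hIcc : Icc a T ⊆ Ici 0 := fun s hs => le_trans ha hs.1
  refine antitoneOn_of_deriv_nonpos (convex_Icc a T) ((contOn_of_hasDeriv hd).mono hIcc) ?_ ?_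
  · intro x hx
    rw [interior_Icc] at hx
    exact (hasDerivAt_of_pos hd (lt_of_le_of_lt ha hx.1)).differentiableAt.differentiableWithinAt
  · intro x hx
    rw [interior_Icc] at hx
    rw [(hasDerivAt_of_pos hd (lt_of_le_of_lt ha hx.1)).deriv]
    exact h x hx

/-- Upper barrier lemma. -/
lemma bar_up (hd : ∀ t ∈ Ici (0:ℝ), HasDerivWithinAt f (f' t) (Ici 0) t)
    (ha : 0 ≤ a) (hb : ∀ t, a ≤ t → b < f t → f' t ≤ 0) :
    ∀ t, a ≤ t → f t ≤ max (f a) b := by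
  intro t hat
  by_contra hcon
  push_neg at hcon
  set m : ℝ := (f t + max (f a) b) / 2 with hm
  have hmb : max (f a) b < m := by simp only [hm]; linarith
  have hmt : m < f t := by simp only [hm]; linarith
  have hIcc : Icc a t ⊆ Ici 0 := fun s hs => le_trans ha hs.1
  have hcont : ContinuousOn f (Icc a t) := (contOn_of_hasDeriv hd).mono hIcc
  set S : Set ℝ := {s ∈ Icc a t | f s ≤ m} with hSdef
  have hSclosed : IsClosed S := by
    have : S = Icc a t ∩ f ⁻¹' (Iic m) := rfl
    rw [this]
    exact hcont.preimage_isClosed_of_isClosed isClosed_Icc isClosed_Iic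
  have hSne : S.Nonempty := ⟨a, ⟨le_rfl, hat⟩, le_of_lt (lt_of_le_of_lt (le_max_left _ _) hmb)⟩
  have hSbdd : BddAbove S := ⟨t, fun s hs => hs.1.2⟩
  set s₀ : ℝ := sSup S with hs₀
  have hs₀S : s₀ ∈ S := hSclosed.csSup_mem hSne hSbdd
  have hs₀t : s₀ ≤ t := hs₀S.1.2
  have hs₀a : a ≤ s₀ := hs₀S.1.1
  have hs₀lt : s₀ < t := lt_of_le_of_ne hs₀t (fun he => absurd (he ▸ hs₀S.2) (not_le.mpr hmt))
  have hgt : ∀ s, s ∈ Ioc s₀ t → m < f s := by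
    intro s hs
    by_contra hle
    push_neg at hle
    have : s ∈ S := ⟨⟨le_trans hs₀a (le_of_lt hs.1), hs.2⟩, hle⟩
    exact absurd (le_csSup hSbdd this) (not_le.mpr hs.1)
  have hanti : AntitoneOn f (Icc s₀ t) := by
    refine anti_on_of_deriv hd (le_trans ha hs₀a) ?_
    intro s hs
    exact hb s (le_trans hs₀a (le_of_lt hs.1)) (lt_trans (lt_of_le_of_lt (le_max_right _ _) hmb) (hgt s ⟨hs.1, le_of_lt hs.2⟩))
  have h2 := hanti (left_mem_Icc.mpr (le_of_lt hs₀lt)) (right_mem_Icc.mpr (le_of_lt hs₀lt)) (le_of_lt hs₀lt)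
  have h3 := hs₀S.2
  linarith

/-- Lower barrier lemma. -/
lemma bar_lo (hd : ∀ t ∈ Ici (0:ℝ), HasDerivWithinAt f (f' t) (Ici 0) t)
    (ha : 0 ≤ a) (hb : ∀ t, a ≤ t → f t < b → 0 ≤ f' t) :
    ∀ t, a ≤ t → min (f a) b ≤ f t := by
  intro t hat
  have h1 := bar_up (f := fun s => -f s) (f' := fun s => -f' s)
    (fun s hs => (hd s hs).neg) ha (b := -b)
    (fun s hs h => by
      simp only [neg_lt_neg_iff] at h
      simp only [neg_nonpos]
      exact hb s hs h) t hat
  rcases le_or_gt (f a) b with hab | hab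
  · rw [min_eq_left hab]
    rw [max_eq_left (by linarith : -b ≤ -f a)] at h1
    linarith
  · rw [min_eq_right (le_of_lt hab)]
    rw [max_eq_right (by linarith : -f a ≤ -b)] at h1
    linarith

/-- Composition of a Lipschitz-on-interval function with a continuous function. -/
lemma cont_comp_lip {φ u : ℝ → ℝ} {lo hi L : ℝ} (hL : 0 ≤ L)
    (hφ : ∀ X ∈ Icc lo hi, ∀ Y ∈ Icc lo hi, |φ X - φ Y| ≤ L * |X - Y|)
    (hu : Continuous u) (hrange : ∀ s, u s ∈ Icc lo hi) :
    Continuous fun s => φ (u s) := by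
  rw [continuous_iff_continuousAt]
  intro s₀
  rw [Metric.continuousAt_iff]
  intro ε hε
  obtain ⟨δ, hδ, hδ'⟩ := Metric.continuousAt_iff.mp hu.continuousAt (ε / (L + 1)) (by positivity)
  refine ⟨δ, hδ, fun {s} hs => ?_⟩
  have h1 := hδ' hs
  have h2 := hφ (u s) (hrange s) (u s₀) (hrange s₀)
  have h3 : |u s - u s₀| < ε / (L + 1) := h1
  calc dist (φ (u s)) (φ (u s₀)) = |φ (u s) - φ (u s₀)| := rfl
    _ ≤ L * |u s - u s₀| := h2
    _ < ε := by
        have h0 : 0 ≤ |u s - u s₀| := abs_nonneg _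
        have h4 : (L + 1) * |u s - u s₀| < ε := by
          rw [← lt_div_iff₀' (by positivity : (0:ℝ) < L + 1)]
          exact h3
        nlinarith

/-- Lower constant bound for set integrals over the real line. -/
lemma setInt_ge_const_vol {s : Set ℝ} (hs : MeasurableSet s) (hvol : volume s ≠ ⊤)
    {φ : ℝ → ℝ} (hφ : IntegrableOn φ s) {c : ℝ} (h : ∀ x ∈ s, c ≤ φ x) :
    c * (volume s).toReal ≤ ∫ x in s, φ x := by
  have h1 : ∫ _ in s, c ≤ ∫ x in s, φ x :=
    setIntegral_mono_on ((integrableOn_const_iff).mpr (Or.inr (lt_top_iff_ne_top.mpr hvol))) hφ hs h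
  rw [setIntegral_const, smul_eq_mul, mul_comm] at h1
  exact h1

/-- Upper constant bound for set integrals over the real line. -/
lemma setInt_le_const_vol {s : Set ℝ} (hs : MeasurableSet s) (hvol : volume s ≠ ⊤)
    {φ : ℝ → ℝ} (hφ : IntegrableOn φ s) {c : ℝ} (h : ∀ x ∈ s, φ x ≤ c) :
    ∫ x in s, φ x ≤ c * (volume s).toReal := by
  have h1 : ∫ x in s, φ x ≤ ∫ _ in s, c :=
    setIntegral_mono_on hφ ((integrableOn_const_iff).mpr (Or.inr (lt_top_iff_ne_top.mpr hvol))) hs h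
  rw [setIntegral_const, smul_eq_mul, mul_comm] at h1
  exact h1

/-- Grönwall upper bound: if `f' ≤ β f` on `[a,T]` then `f T ≤ f a * exp (∫ β)`. -/
lemma gronwall_up (hd : ∀ t ∈ Ici (0:ℝ), HasDerivWithinAt f (f' t) (Ici 0) t)
    (hβ : Continuous β) (ha : 0 ≤ a) (haT : a ≤ T)
    (h : ∀ t, t ∈ Icc a T → f' t ≤ β t * f t) :
    f T ≤ f a * Real.exp (∫ s in a..T, β s) := by
  set I : ℝ → ℝ := fun t => ∫ s in a..t, β s with hI
  have hIderiv : ∀ t : ℝ, HasDerivAt I (β t) t := fun t =>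
    intervalIntegral.integral_hasDerivAt_right (hβ.intervalIntegrable a t)
      (hβ.stronglyMeasurable.stronglyMeasurableAtFilter) hβ.continuousAt
  have hIcont : Continuous I := by
    have : Differentiable ℝ I := fun t => (hIderiv t).differentiableAt
    exact this.continuous
  set g : ℝ → ℝ := fun t => f t * Real.exp (-I t) with hg
  have hderiv : ∀ x, x ∈ Ioo a T → HasDerivAt g
      (f' x * Real.exp (-I x) + f x * (Real.exp (-I x) * (-β x))) x := by
    intro x hx
    have hf := hasDerivAt_of_pos hd (lt_of_le_of_lt ha hx.1)
    exact hf.mul (((hIderiv x).neg).exp)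
  have hanti : AntitoneOn g (Icc a T) := by
    refine antitoneOn_of_deriv_nonpos (convex_Icc a T)
      (((contOn_of_hasDeriv hd).mono (fun s hs => le_trans ha hs.1)).mul
        ((hIcont.neg.rexp).continuousOn)) ?_ ?_
    · intro x hx
      rw [interior_Icc] at hx
      exact (hderiv x hx).differentiableAt.differentiableWithinAt
    · intro x hx
      rw [interior_Icc] at hx
      rw [(hderiv x hx).deriv]
      have hle := h x ⟨le_of_lt hx.1, le_of_lt hx.2⟩
      have hexp : (0:ℝ) < Real.exp (-I x) := Real.exp_pos _
      nlinarith
  have hTa : g T ≤ g a := hanti (left_mem_Icc.mpr haT) (right_mem_Icc.mpr haT) haT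
  have hIa : I a = 0 := intervalIntegral.integral_same
  have hga : g a = f a := by rw [hg]; simp [hIa]
  rw [hga] at hTa
  have := mul_le_mul_of_nonneg_right hTa (Real.exp_pos (I T)).le
  rw [hg] at this
  simp only [mul_assoc, ← Real.exp_add, neg_add_cancel, Real.exp_zero, mul_one] at this
  exact this

/-- Grönwall lower bound. -/
lemma gronwall_lo (hd : ∀ t ∈ Ici (0:ℝ), HasDerivWithinAt f (f' t) (Ici 0) t)
    (hβ : Continuous β) (ha : 0 ≤ a) (haT : a ≤ T)
    (h : ∀ t, t ∈ Icc a T → β t * f t ≤ f' t) :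
    f a * Real.exp (∫ s in a..T, β s) ≤ f T := by
  have h1 := gronwall_up (f := fun s => -f s) (f' := fun s => -f' s)
    (fun s hs => (hd s hs).neg) hβ ha haT
    (fun t ht => by
      simp only [mul_neg, neg_le_neg_iff]
      exact h t ht)
  simp only [neg_mul] at h1
  linarith

/-- Linear decay bound. -/
lemma decay_bound (hd : ∀ t ∈ Ici (0:ℝ), HasDerivWithinAt f (f' t) (Ici 0) t)
    (ha : 0 ≤ a) (haT : a ≤ T) (h : ∀ t, t ∈ Icc a T → f' t ≤ c) :
    f T ≤ f a + c * (T - a) := by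
  set g : ℝ → ℝ := fun t => f t - c * t with hg
  have hanti : AntitoneOn g (Icc a T) := by
    refine antitoneOn_of_deriv_nonpos (convex_Icc a T)
      (((contOn_of_hasDeriv hd).mono (fun s hs => le_trans ha hs.1)).sub
        (continuousOn_const.mul continuousOn_id)) ?_ ?_
    · intro x hx
      rw [interior_Icc] at hx
      exact ((hasDerivAt_of_pos hd (lt_of_le_of_lt ha hx.1)).sub
        ((hasDerivAt_id x).const_mul c)).differentiableAt.differentiableWithinAt
    · intro x hx
      rw [interior_Icc] at hx
      have hdg : HasDerivAt g (f' x - c) x := by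
        have h1 := (hasDerivAt_of_pos hd (lt_of_le_of_lt ha hx.1)).sub
          ((hasDerivAt_id x).const_mul c)
        exact h1.congr_deriv (by ring)
      rw [hdg.deriv]
      have := h x ⟨le_of_lt hx.1, le_of_lt hx.2⟩
      linarith
  have := hanti (left_mem_Icc.mpr haT) (right_mem_Icc.mpr haT) haT
  simp only [hg] at this
  linarith

end Helpers


/-- Support of a Borel measure: points all of whose neighborhoods have positive measure. -/
def msupport {Q : Type*} [MetricSpace Q] [MeasurableSpace Q] (μ : Measure Q) : Set Q :=
  {q | ∀ ε : ℝ, 0 < ε → 0 < μ (Metric.ball q ε)}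

/-- A solution of the full selection–mutation model with mutation kernel `γ`. -/
def IsSelMutSolution {Q : Type*} [MetricSpace Q] [MeasurableSpace Q] [BorelSpace Q]
    (M : EGTRates Q) (γ : Q → ProbabilityMeasure Q) (μ : ℝ → Measure Q) : Prop :=
  (∀ t, IsFiniteMeasure (μ t)) ∧
  ∀ t ∈ Set.Ici (0:ℝ), ∀ E : Set Q, MeasurableSet E →
    HasDerivWithinAt (fun s => (μ s E).toReal)
      ((∫ qq, M.f₁ (μ t Set.univ).toReal qq * ((γ qq : Measure Q) E).toReal ∂(μ t)) -
        ∫ qq in E, M.f₂ (μ t Set.univ).toReal qq ∂(μ t)) (Set.Ici 0) t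

/-- A solution of the pure selection (replicator) model. -/
def IsPureSelectionSolution {Q : Type*} [MetricSpace Q] [MeasurableSpace Q] [BorelSpace Q]
    (M : EGTRates Q) (μ : ℝ → Measure Q) : Prop :=
  (∀ t, IsFiniteMeasure (μ t)) ∧
  ∀ t ∈ Set.Ici (0:ℝ), ∀ E : Set Q, MeasurableSet E →
    HasDerivWithinAt (fun s => (μ s E).toReal)
      (∫ q in E, (M.f₁ (μ t Set.univ).toReal q - M.f₂ (μ t Set.univ).toReal q) ∂(μ t))
      (Set.Ici 0) t


section SolutionFacts

variable {Q : Type*} [MetricSpace Q] [CompactSpace Q] [MeasurableSpace Q] [BorelSpace Q]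

lemma integrable_of_cont {ν : Measure Q} [IsFiniteMeasure ν] {φ : Q → ℝ} (hφ : Continuous φ) :
    Integrable φ ν := by
  have : ∃ b : ℝ, ∀ q : Q, |φ q| ≤ b := by
    rcases isEmpty_or_nonempty Q with hQ | hQ
    · exact ⟨0, fun q => (IsEmpty.false q).elim⟩
    · obtain ⟨qm, -, hqm⟩ := isCompact_univ.exists_isMaxOn univ_nonempty hφ.abs.continuousOn
      exact ⟨|φ qm|, fun q => hqm (mem_univ q)⟩
  obtain ⟨b, hb⟩ := this
  exact (integrable_const b).mono' hφ.aestronglyMeasurable (Eventually.of_forall (fun q => by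
    simpa using hb q))

lemma setInt_le_of_bound {ν : Measure Q} [IsFiniteMeasure ν] {φ : Q → ℝ} (hφ : Continuous φ)
    {E : Set Q} (hE : MeasurableSet E) {c : ℝ} (h : ∀ q ∈ E, φ q ≤ c) :
    ∫ q in E, φ q ∂ν ≤ c * (ν E).toReal := by
  have h1 : ∫ q in E, φ q ∂ν ≤ ∫ _ in E, c ∂ν :=
    setIntegral_mono_on (integrable_of_cont hφ).integrableOn ((integrableOn_const_iff).mpr
      (Or.inr (measure_lt_top ν E))) hE h
  rw [setIntegral_const, smul_eq_mul, mul_comm] at h1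
  exact h1

lemma setInt_ge_of_bound {ν : Measure Q} [IsFiniteMeasure ν] {φ : Q → ℝ} (hφ : Continuous φ)
    {E : Set Q} (hE : MeasurableSet E) {c : ℝ} (h : ∀ q ∈ E, c ≤ φ q) :
    c * (ν E).toReal ≤ ∫ q in E, φ q ∂ν := by
  have h1 : ∫ _ in E, c ∂ν ≤ ∫ q in E, φ q ∂ν :=
    setIntegral_mono_on ((integrableOn_const_iff).mpr (Or.inr (measure_lt_top ν E)))
      (integrable_of_cont hφ).integrableOn hE h
  rw [setIntegral_const, smul_eq_mul, mul_comm] at h1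
  exact h1

variable (μ : ℝ → Measure Q)

/-- Total mass. -/
def totalMass : ℝ → ℝ := fun t => (μ t Set.univ).toReal

/-- Mass of a set. -/
def setMass (E : Set Q) : ℝ → ℝ := fun t => (μ t E).toReal

variable {M : EGTRates Q}

lemma setMass_nonneg (E : Set Q) (t : ℝ) : 0 ≤ setMass μ E t := ENNReal.toReal_nonneg

lemma setMass_le_totalMass (hμ : IsPureSelectionSolution M μ) (E : Set Q) (t : ℝ) :
    setMass μ E t ≤ totalMass μ t := by
  have := hμ.1 t
  exact ENNReal.toReal_le_toReal (measure_ne_top _ _) (measure_ne_top _ _) |>.mpr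
    (measure_mono (subset_univ E))

lemma totalMass_nonneg (t : ℝ) : 0 ≤ totalMass μ t := ENNReal.toReal_nonneg

lemma setMass_add_compl (hμ : IsPureSelectionSolution M μ) {E : Set Q} (hE : MeasurableSet E)
    (t : ℝ) : setMass μ E t + setMass μ Eᶜ t = totalMass μ t := by
  have := hμ.1 t
  rw [setMass, setMass, totalMass, ← ENNReal.toReal_add (measure_ne_top _ _) (measure_ne_top _ _),
    measure_add_measure_compl hE]

lemma setMass_hasDeriv (hμ : IsPureSelectionSolution M μ) {E : Set Q} (hE : MeasurableSet E) :
    ∀ t ∈ Ici (0:ℝ), HasDerivWithinAt (setMass μ E)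
      (∫ q in E, M.g (totalMass μ t) q ∂(μ t)) (Ici 0) t := by
  intro t ht
  have := hμ.2 t ht E hE
  exact this

lemma totalMass_hasDeriv (hμ : IsPureSelectionSolution M μ) :
    ∀ t ∈ Ici (0:ℝ), HasDerivWithinAt (totalMass μ)
      (∫ q, M.g (totalMass μ t) q ∂(μ t)) (Ici 0) t := by
  intro t ht
  have h := hμ.2 t ht Set.univ MeasurableSet.univ
  rw [setIntegral_univ] at h
  exact h

lemma totalMass_contOn (hμ : IsPureSelectionSolution M μ) :
    ContinuousOn (totalMass μ) (Ici 0) :=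
  fun t ht => (totalMass_hasDeriv μ hμ t ht).continuousWithinAt

/-- Total mass, stopped at time `0` (continuous on all of `ℝ`). -/
def totalMassC : ℝ → ℝ := fun t => totalMass μ (max t 0)

lemma totalMassC_eq (t : ℝ) (ht : 0 ≤ t) : totalMassC μ t = totalMass μ t := by
  rw [totalMassC, max_eq_left ht]

lemma totalMassC_cont (hμ : IsPureSelectionSolution M μ) : Continuous (totalMassC μ) := by
  refine ContinuousOn.comp_continuous (totalMass_contOn μ hμ)
    (continuous_id.max continuous_const) (fun x => ?_)
  exact le_max_right x 0

end SolutionFacts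


set_option maxHeartbeats 2000000 in
/-- Unique fittest strategy: if `[𝔔]_R = {𝔔}` and `𝔔 ∈ supp(μ(0))`, then
`μ(t) → K_𝔔 δ_𝔔` in the weak* topology. -/
theorem pureSelection_weakStar_convergence_to_Dirac
    {Q : Type*} [MetricSpace Q] [CompactSpace Q] [MeasurableSpace Q] [BorelSpace Q]
    (M : EGTRates Q) (𝔔 𝔮 : Q) (hA : M.Assumptions 𝔔 𝔮)
    (hunique : M.fittestClass 𝔔 = {𝔔})
    (μ : ℝ → Measure Q) (hμ : IsPureSelectionSolution M μ)
    (hsupp : 𝔔 ∈ msupport (μ 0)) :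
    ∀ f : Q → ℝ, Continuous f →
      Filter.Tendsto (fun t => ∫ q, f q ∂(μ t)) Filter.atTop
        (nhds (M.carCap 𝔔 * f 𝔔)) := by
  intro f hf
  obtain ⟨ϖ, hϖ, hϖ₂⟩ := M.f₂_inf_pos
  obtain ⟨hA1, hA2, hA3, hA4, hA5, -⟩ := hA
  have hfinmeas : ∀ t, IsFiniteMeasure (μ t) := hμ.1
  set X : ℝ → ℝ := totalMass μ with hXdef
  have hX0 : ∀ t, 0 ≤ X t := totalMass_nonneg μ
  have hXd : ∀ t ∈ Ici (0:ℝ), HasDerivWithinAt X (∫ q, M.g (X t) q ∂(μ t)) (Ici 0) t :=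
    totalMass_hasDeriv μ hμ
  -- the Lipschitz comparison `R Y q ≤ R Y 𝔔`
  have hRle : ∀ Y : ℝ, 0 ≤ Y → ∀ q, M.R Y q ≤ M.R Y 𝔔 := by
    intro Y hY q
    rcases lt_or_eq_of_le (hA1 q) with h | h
    · exact le_of_lt ((hA4 𝔔 q Y hY).1 h)
    · exact le_of_eq ((hA4 𝔔 q Y hY).2 h.symm).symm
  set K : ℝ := M.carCap 𝔔 with hKdef
  have hK0 : 0 ≤ K := by
    rw [hKdef, EGTRates.carCap]
    split
    · obtain ⟨X₀, hX₀, hRX₀⟩ := hA3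
      exact le_csInf ⟨X₀, hX₀, hRX₀⟩ (fun b hb => hb.1)
    · exact le_rfl
  -- bound on f
  have hfbd : ∃ b : ℝ, 0 ≤ b ∧ ∀ q : Q, |f q| ≤ b := by
    have hne : Nonempty Q := ⟨𝔔⟩
    obtain ⟨qm, -, hqm⟩ := isCompact_univ.exists_isMaxOn univ_nonempty hf.abs.continuousOn
    exact ⟨|f qm|, abs_nonneg _, fun q => hqm (mem_univ q)⟩
  obtain ⟨Mf, hMf0, hMf⟩ := hfbd
  by_cases hcase : 1 < M.R 0 𝔔
  case neg =>
    -- R(0,𝔔) ≤ 1 : total extinction, K = 0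
    push_neg at hcase
    have hKeq : K = 0 := by
      rw [hKdef, EGTRates.carCap]
      split
      · rename_i h1
        obtain ⟨X₀, hX₀, hRX₀⟩ := hA3
        exact le_antisymm (csInf_le ⟨0, fun b hb => hb.1⟩ ⟨le_rfl, hcase⟩)
          (le_csInf ⟨X₀, hX₀, hRX₀⟩ (fun b hb => hb.1))
      · rfl
    -- tendsto X atTop 0
    have claimA : ∀ ε : ℝ, 0 < ε → ∃ T : ℝ, 0 ≤ T ∧ ∀ t, T ≤ t → X t < ε := by
      intro ε hε
      have hgle : ∀ t, 0 ≤ t → ∀ q, M.g (X t) q ≤ 0 := by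
        intro t ht q
        refine M.g_nonpos hϖ hϖ₂ (hX0 t) ?_
        calc M.R (X t) q ≤ M.R (X t) 𝔔 := hRle (X t) (hX0 t) q
          _ ≤ M.R 0 𝔔 := M.R_anti hϖ hϖ₂ 𝔔 le_rfl (hX0 t)
          _ ≤ 1 := hcase
      have hd' : ∀ t, 0 ≤ t → (∫ q, M.g (X t) q ∂(μ t)) ≤ 0 := by
        intro t ht
        have h1 : ∫ q in Set.univ, M.g (X t) q ∂(μ t) ≤ 0 * (μ t Set.univ).toReal := by
          have := hfinmeas t
          exact setInt_le_of_bound (M.g_contq (X t)) MeasurableSet.univ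
            (fun q _ => hgle t ht q)
        rw [setIntegral_univ, zero_mul] at h1
        exact h1
      by_cases hex : ∃ t₀, 0 ≤ t₀ ∧ X t₀ < ε
      · obtain ⟨t₀, ht₀, hXt₀⟩ := hex
        refine ⟨t₀, ht₀, fun t ht => ?_⟩
        have := bar_up hXd ht₀ (b := 0) (fun s hs _ => hd' s (le_trans ht₀ hs)) t ht
        calc X t ≤ max (X t₀) 0 := this
          _ = X t₀ := max_eq_left (hX0 t₀)
          _ < ε := hXt₀
      · push_neg at hex
        exfalso
        have hXε : ∀ t, 0 ≤ t → ε ≤ X t := fun t ht => (hex t ht)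
        have hRε : M.R ε 𝔔 < 1 := by
          rcases lt_or_eq_of_le (le_trans (M.R_anti hϖ hϖ₂ 𝔔 le_rfl hε.le) hcase) with h | h
          · exact h
          · exfalso
            have h1le : (1:ℝ) ≤ M.R 0 𝔔 := by
              have := M.R_anti hϖ hϖ₂ 𝔔 le_rfl hε.le
              rw [h] at this; exact this
            have := (hA5 h1le).2 ε hε.le h
            rw [hKeq] at this
            exact absurd this (ne_of_gt hε)
        set ω : ℝ := 1 - M.R ε 𝔔 with hω
        have hω0 : 0 < ω := by rw [hω]; linarith
        have hder : ∀ t, 0 ≤ t → (∫ q, M.g (X t) q ∂(μ t)) ≤ -(ω * ϖ * ε) := by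
          intro t ht
          have hgle2 : ∀ q, M.g (X t) q ≤ -(ω * ϖ) := by
            intro q
            refine M.g_le_neg hϖ hϖ₂ (hX0 t) hω0.le ?_
            calc M.R (X t) q ≤ M.R (X t) 𝔔 := hRle (X t) (hX0 t) q
              _ ≤ M.R ε 𝔔 := M.R_anti hϖ hϖ₂ 𝔔 hε.le (hXε t ht)
              _ = 1 - ω := by rw [hω]; ring
          have h1 : ∫ q in Set.univ, M.g (X t) q ∂(μ t) ≤ -(ω * ϖ) * (μ t Set.univ).toReal := by
            have := hfinmeas t
            exact setInt_le_of_bound (M.g_contq (X t)) MeasurableSet.univ (fun q _ => hgle2 q)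
          rw [setIntegral_univ] at h1
          have hXt : ((μ t) Set.univ).toReal = X t := rfl
          rw [hXt] at h1
          refine le_trans h1 ?_
          have := hXε t ht
          nlinarith [mul_pos hω0 hϖ]
        set c : ℝ := ω * ϖ * ε with hc
        have hc0 : 0 < c := by positivity
        set T : ℝ := (X 0) / c + 1 with hT
        have hT0 : 0 ≤ T := by
          have := hX0 0
          rw [hT]; positivity
        have := decay_bound hXd (le_refl (0:ℝ)) hT0 (fun s hs => hder s hs.1)
        have hXT := hX0 T
        rw [sub_zero] at this
        have : X T ≤ X 0 - c * T := by linarith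
        rw [hT] at this
        have hX00 := hX0 0
        have : X T < 0 := by
          have hcc : c * (X 0 / c + 1) = X 0 + c := by field_simp
          rw [hcc] at this
          linarith
        linarith
    have hXto0 : Tendsto X atTop (nhds 0) := by
      rw [Metric.tendsto_atTop]
      intro ε hε
      obtain ⟨T, hT0, hT⟩ := claimA ε hε
      exact ⟨T, fun t ht => by
        rw [Real.dist_eq, sub_zero, abs_of_nonneg (hX0 t)]
        exact hT t ht⟩
    rw [hKeq, zero_mul]
    refine squeeze_zero_norm (fun t => ?_) (by simpa using hXto0.const_mul Mf)
    show ‖∫ q, f q ∂(μ t)‖ ≤ Mf * X t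
    rw [Real.norm_eq_abs]
    have := hfinmeas t
    calc |∫ q, f q ∂(μ t)| ≤ Mf * (μ t Set.univ).toReal := by
          rw [← setIntegral_univ]
          have h1 : ∫ q in Set.univ, f q ∂(μ t) ≤ Mf * (μ t Set.univ).toReal :=
            setInt_le_of_bound hf MeasurableSet.univ (fun q _ => (abs_le.mp (hMf q)).2)
          have h2 : -(Mf * (μ t Set.univ).toReal) ≤ ∫ q in Set.univ, f q ∂(μ t) := by
            have := setInt_ge_of_bound (ν := μ t) hf MeasurableSet.univ
              (c := -Mf) (fun q _ => (abs_le.mp (hMf q)).1)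
            rw [neg_mul] at this
            exact this
          rw [abs_le]
          constructor <;> linarith
      _ = Mf * X t := rfl
  case pos =>
    -- V0: basic constants
    have h1le : (1:ℝ) ≤ M.R 0 𝔔 := hcase.le
    have hRK : M.R K 𝔔 = 1 := (hA5 h1le).1
    have hKuniq : ∀ x, 0 ≤ x → M.R x 𝔔 = 1 → x = K := (hA5 h1le).2
    have hKpos : 0 < K := by
      rcases lt_or_eq_of_le hK0 with h | h
      · exact h
      · exfalso; rw [← h] at hRK; rw [← hRK] at hcase; exact lt_irrefl _ hcase
    -- whenever X t ≥ K, all growth rates are nonpositive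
    have hgK : ∀ t, 0 ≤ t → K ≤ X t → ∀ q, M.g (X t) q ≤ 0 := by
      intro t ht hKt q
      refine M.g_nonpos hϖ hϖ₂ (hX0 t) ?_
      calc M.R (X t) q ≤ M.R (X t) 𝔔 := hRle (X t) (hX0 t) q
        _ ≤ M.R K 𝔔 := M.R_anti hϖ hϖ₂ 𝔔 hK0 hKt
        _ = 1 := hRK
    have hderK : ∀ t, 0 ≤ t → K ≤ X t → (∫ q, M.g (X t) q ∂(μ t)) ≤ 0 := by
      intro t ht hKt
      have := hfinmeas t
      have h1 : ∫ q in Set.univ, M.g (X t) q ∂(μ t) ≤ 0 * (μ t Set.univ).toReal :=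
        setInt_le_of_bound (M.g_contq (X t)) MeasurableSet.univ (fun q _ => hgK t ht hKt q)
      rw [setIntegral_univ, zero_mul] at h1
      exact h1
    -- V0': global bound for the trajectory
    set B : ℝ := max (X 0) K with hB
    have hKB : K ≤ B := le_max_right _ _
    have hBpos : 0 < B := lt_of_lt_of_le hKpos hKB
    have hXB : ∀ t, 0 ≤ t → X t ≤ B := by
      intro t ht
      have := bar_up hXd (le_refl (0:ℝ)) (b := K)
        (fun s hs h => hderK s hs h.le) t ht
      exact this
    set CC : ℝ := B + 2 with hCC
    have hCC0 : (0:ℝ) ≤ CC := by linarith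
    obtain ⟨L, hL, hLip⟩ := M.g_lip CC
    obtain ⟨G, hG0, hG⟩ := M.g_bound 𝔔 CC hCC0
    have hXcc : ∀ t, 0 ≤ t → X t ∈ Icc (0:ℝ) CC := fun t ht =>
      ⟨hX0 t, by have := hXB t ht; linarith⟩
    set Xc : ℝ → ℝ := totalMassC μ with hXc
    have hXceq : ∀ t, 0 ≤ t → Xc t = X t := fun t ht => totalMassC_eq μ t ht
    have hXccont : Continuous Xc := totalMassC_cont μ hμ
    have hXcmem : ∀ s, Xc s ∈ Icc (0:ℝ) CC := by
      intro s
      have h0 : (0:ℝ) ≤ max s 0 := le_max_right _ _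
      exact hXcc (max s 0) h0
    have hXcB : ∀ s, Xc s ≤ B := fun s => hXB (max s 0) (le_max_right _ _)
    have hXc0 : ∀ s, 0 ≤ Xc s := fun s => hX0 (max s 0)
    -- V1: eventual upper bound K + ε
    have claimB : ∀ ε : ℝ, 0 < ε → ∃ T : ℝ, 0 ≤ T ∧ ∀ t, T ≤ t → X t ≤ K + ε := by
      intro ε hε
      by_cases hex : ∃ t₀, 0 ≤ t₀ ∧ X t₀ ≤ K + ε / 2
      · obtain ⟨t₀, ht₀, hXt₀⟩ := hex
        refine ⟨t₀, ht₀, fun t ht => ?_⟩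
        have := bar_up hXd ht₀ (b := K)
          (fun s hs h => hderK s (le_trans ht₀ hs) h.le) t ht
        calc X t ≤ max (X t₀) K := this
          _ ≤ K + ε := max_le (by linarith) (by linarith)
      · exfalso
        push_neg at hex
        have hXε : ∀ t, 0 ≤ t → K + ε / 2 < X t := hex
        have hRε : M.R (K + ε / 2) 𝔔 < 1 := by
          rcases lt_or_eq_of_le (le_of_le_of_eq (M.R_anti hϖ hϖ₂ 𝔔 (X := K) (Y := K + ε / 2) hK0 (by linarith)) hRK) with h | h
          · exact h
          · exfalso
            have := hKuniq (K + ε / 2) (by linarith) h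
            linarith
        set ω : ℝ := 1 - M.R (K + ε / 2) 𝔔 with hω
        have hω0 : 0 < ω := by rw [hω]; linarith
        have hder : ∀ t, 0 ≤ t → (∫ q, M.g (X t) q ∂(μ t)) ≤ -(ω * ϖ * (K + ε / 2)) := by
          intro t ht
          have hgle2 : ∀ q, M.g (X t) q ≤ -(ω * ϖ) := by
            intro q
            refine M.g_le_neg hϖ hϖ₂ (hX0 t) hω0.le ?_
            calc M.R (X t) q ≤ M.R (X t) 𝔔 := hRle (X t) (hX0 t) q
              _ ≤ M.R (K + ε / 2) 𝔔 := M.R_anti hϖ hϖ₂ 𝔔 (X := K + ε / 2) (Y := X t) (by linarith) (hXε t ht).le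
              _ = 1 - ω := by rw [hω]; ring
          have := hfinmeas t
          have h1 : ∫ q in Set.univ, M.g (X t) q ∂(μ t) ≤ -(ω * ϖ) * (μ t Set.univ).toReal :=
            setInt_le_of_bound (M.g_contq (X t)) MeasurableSet.univ (fun q _ => hgle2 q)
          rw [setIntegral_univ] at h1
          have hXt : ((μ t) Set.univ).toReal = X t := rfl
          rw [hXt] at h1
          refine le_trans h1 ?_
          have h3 := (hXε t ht).le
          have h4 : ω * ϖ * (K + ε / 2) ≤ ω * ϖ * (X t) :=
            mul_le_mul_of_nonneg_left h3 (mul_pos hω0 hϖ).le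
          nlinarith
        set c : ℝ := ω * ϖ * (K + ε / 2) with hc
        have hc0 : 0 < c := by
          rw [hc]; positivity
        set T : ℝ := (X 0) / c + 1 with hT
        have hT0 : 0 ≤ T := by
          have := hX0 0
          rw [hT]; positivity
        have hdec := decay_bound hXd (le_refl (0:ℝ)) hT0 (fun s hs => hder s hs.1)
        have hXT := hX0 T
        rw [sub_zero] at hdec
        have hfin : X T ≤ X 0 - c * T := by linarith
        rw [hT] at hfin
        have hcc : c * (X 0 / c + 1) = X 0 + c := by field_simp
        rw [hcc] at hfin
        linarith
    -- V2: positivity of mass of balls around 𝔔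
    have hball : ∀ ρ : ℝ, 0 < ρ → ∀ t, 0 ≤ t → 0 < setMass μ (Metric.ball 𝔔 ρ) t := by
      intro ρ hρ t ht
      have hmb : MeasurableSet (Metric.ball 𝔔 ρ) := Metric.isOpen_ball.measurableSet
      have hd := setMass_hasDeriv μ hμ hmb
      have h0 : 0 < setMass μ (Metric.ball 𝔔 ρ) 0 := by
        have := hsupp ρ hρ
        have hfin := hfinmeas 0
        exact ENNReal.toReal_pos (ne_of_gt this) (measure_ne_top _ _)
      have hlo := gronwall_lo (f := setMass μ (Metric.ball 𝔔 ρ))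
        (f' := fun s => ∫ q in Metric.ball 𝔔 ρ, M.g (X s) q ∂(μ s))
        (β := fun _ => -G) hd continuous_const (le_refl (0:ℝ)) ht ?_
      · calc (0:ℝ) < setMass μ (Metric.ball 𝔔 ρ) 0 * Real.exp (∫ s in (0:ℝ)..t, -G) := by
              positivity
          _ ≤ setMass μ (Metric.ball 𝔔 ρ) t := hlo
      · intro s hs
        have hfin := hfinmeas s
        have hp : ∀ q ∈ Metric.ball 𝔔 ρ, -G ≤ M.g (X s) q := by
          intro q _
          have := hG q (X s) (hXcc s hs.1)
          have := abs_le.mp this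
          linarith [this.1]
        have h1 := setInt_ge_of_bound (ν := μ s) (M.g_contq (X s)) hmb hp
        have h2 : -G * ((μ s) (Metric.ball 𝔔 ρ)).toReal = -G * setMass μ (Metric.ball 𝔔 ρ) s := rfl
        rw [h2] at h1
        exact h1
    -- minimum growth rate when below K - η
    have hcmin : ∀ η : ℝ, 0 < η → η < K → ∃ c : ℝ, 0 < c ∧ ∀ Y ∈ Icc (0:ℝ) (K - η), c ≤ M.g Y 𝔔 := by
      intro η hη hηK
      have hsub : Icc (0:ℝ) (K - η) ⊆ Icc (-CC) CC := by
        intro y hy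
        constructor
        · linarith [hy.1]
        · have := hy.2; have : y ≤ K - η := this; linarith
      have hcont : ContinuousOn (fun Y => M.g Y 𝔔) (Icc (0:ℝ) (K - η)) :=
        (M.g_contX 𝔔 CC).mono hsub
      obtain ⟨Ym, hYm, hYmin⟩ := isCompact_Icc.exists_isMinOn
        (nonempty_Icc.mpr (by linarith)) hcont
      refine ⟨M.g Ym 𝔔, ?_, fun Y hY => hYmin hY⟩
      have hYm0 : (0:ℝ) ≤ Ym := hYm.1
      have hRYm : 1 < M.R Ym 𝔔 := by
        have h1 : M.R K 𝔔 ≤ M.R Ym 𝔔 :=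
          M.R_anti hϖ hϖ₂ 𝔔 (X := Ym) (Y := K) hYm0 (le_trans hYm.2 (by linarith))
        rcases lt_or_eq_of_le (le_of_eq_of_le hRK.symm h1) with h | h
        · exact h
        · exfalso
          have := hKuniq Ym hYm0 h.symm
          have hYm2 := hYm.2
          linarith
      exact M.g_pos hϖ hϖ₂ hYm0 hRYm
    -- continuity of the composite growth rate along the trajectory
    have hXcmem' : ∀ s, Xc s ∈ Icc (-CC) CC := fun s =>
      ⟨by linarith [(hXcmem s).1], (hXcmem s).2⟩
    have hφcont : Continuous fun s => M.g (Xc s) 𝔔 :=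
      cont_comp_lip hL (fun Xa hXa Ya hYa => hLip 𝔔 Xa hXa Ya hYa) hXccont hXcmem'
    have hKmem : K ∈ Icc (-CC) CC := ⟨by linarith, by linarith⟩
    -- V3: sublinear growth of the 𝔔-exponent
    have avg : ∀ δ : ℝ, 0 < δ → ∃ Cδ : ℝ, ∀ T, 0 ≤ T →
        ∫ s in (0:ℝ)..T, M.g (Xc s) 𝔔 ≤ δ * T + Cδ := by
      intro δ hδ
      obtain ⟨ρ, hρ, hρ'⟩ := M.g_unif 𝔔 CC hCC0 hδ
      set U : Set Q := Metric.ball 𝔔 ρ with hUdef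
      have hU : MeasurableSet U := Metric.isOpen_ball.measurableSet
      set u : ℝ → ℝ := setMass μ U with hu
      have hu0 : 0 < u 0 := hball ρ hρ 0 le_rfl
      set β : ℝ → ℝ := fun s => M.g (Xc s) 𝔔 - δ with hβ
      have hβcont : Continuous β := hφcont.sub continuous_const
      refine ⟨Real.log (B / u 0), fun T hT => ?_⟩
      have hder : ∀ t, t ∈ Icc (0:ℝ) T → β t * u t ≤ ∫ q in U, M.g (X t) q ∂(μ t) := by
        intro t ht
        have := hfinmeas t
        have hpt : ∀ q ∈ U, M.g (X t) 𝔔 - δ ≤ M.g (X t) q := by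
          intro q hq
          have h1 := hρ' q (Metric.mem_ball.mp hq) (X t) (hXcc t ht.1)
          have := abs_le.mp h1
          linarith [this.1]
        have h2 := setInt_ge_of_bound (ν := μ t) (M.g_contq (X t)) hU hpt
        have h3 : β t = M.g (X t) 𝔔 - δ := by
          simp only [hβ]
          rw [hXceq t ht.1]
        rw [h3]
        exact h2
      have hlo := gronwall_lo (f := u)
        (f' := fun t => ∫ q in U, M.g (X t) q ∂(μ t))
        (setMass_hasDeriv μ hμ hU) hβcont (le_refl (0:ℝ)) hT hder
      have huT : u T ≤ B := le_trans (setMass_le_totalMass μ hμ U T) (hXB T hT)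
      have hexp : Real.exp (∫ s in (0:ℝ)..T, β s) ≤ B / u 0 := by
        rw [le_div_iff₀ hu0]
        calc Real.exp (∫ s in (0:ℝ)..T, β s) * u 0
            = u 0 * Real.exp (∫ s in (0:ℝ)..T, β s) := by ring
          _ ≤ u T := hlo
          _ ≤ B := huT
      have hlog : (∫ s in (0:ℝ)..T, β s) ≤ Real.log (B / u 0) :=
        (Real.le_log_iff_exp_le (div_pos hBpos hu0)).mpr hexp
      have hsplit : (∫ s in (0:ℝ)..T, β s)
          = (∫ s in (0:ℝ)..T, M.g (Xc s) 𝔔) - δ * T := by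
        simp only [hβ]
        rw [intervalIntegral.integral_sub (hφcont.intervalIntegrable 0 T)
          (intervalIntegrable_const), intervalIntegral.integral_const]
        simp only [smul_eq_mul, sub_zero]
        ring
      rw [hsplit] at hlog
      linarith
    -- V4: the time spent below K - η has zero density
    have lowtime : ∀ η : ℝ, 0 < η → η < K → ∀ θ : ℝ, 0 < θ → ∃ Cθ : ℝ, ∀ T, 0 ≤ T →
        (volume {s : ℝ | s ∈ Icc (0:ℝ) T ∧ Xc s ≤ K - η}).toReal ≤ θ * T + Cθ := by
      intro η hη hηK θ hθ
      obtain ⟨c, hc0, hcmin'⟩ := hcmin η hη hηK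
      set δ : ℝ := θ * c / 4 with hδdef
      have hδ : 0 < δ := by positivity
      set εb : ℝ := min (θ * c / 4 / (L + 1)) 1 with hεbdef
      have hεb : 0 < εb := lt_min (by positivity) one_pos
      have hεb1 : εb ≤ 1 := min_le_right _ _
      have hL1 : (L:ℝ) + 1 ≠ 0 := by positivity
      have hLεb : (L + 1) * εb ≤ θ * c / 4 := by
        have h1 : εb ≤ θ * c / 4 / (L + 1) := min_le_left _ _
        have h2 : (L + 1) * εb ≤ (L + 1) * (θ * c / 4 / (L + 1)) :=
          mul_le_mul_of_nonneg_left h1 (by linarith)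
        have h3 : (L + 1) * (θ * c / 4 / (L + 1)) = θ * c / 4 := by
          rw [mul_comm]
          exact div_mul_cancel₀ _ hL1
        linarith
      obtain ⟨Cδ, hCδ⟩ := avg δ hδ
      obtain ⟨Tε, hTε0, hTε⟩ := claimB εb hεb
      refine ⟨(|Cδ| + G * Tε) / c + Tε, fun T hT => ?_⟩
      set A : Set ℝ := {s : ℝ | s ∈ Icc (0:ℝ) T ∧ Xc s ≤ K - η} with hAdef
      have hAclosed : IsClosed A := by
        have : A = Icc (0:ℝ) T ∩ Xc ⁻¹' (Iic (K - η)) := rfl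
        rw [this]
        exact isClosed_Icc.inter (isClosed_Iic.preimage hXccont)
      have hAmeas : MeasurableSet A := hAclosed.measurableSet
      have hAsubIcc : A ⊆ Icc 0 T := fun s hs => hs.1
      have hAfin : volume A ≠ ⊤ := by
        refine ne_top_of_le_ne_top ?_ (measure_mono hAsubIcc)
        rw [Real.volume_Icc]
        exact ENNReal.ofReal_ne_top
      have hvolIcc : (volume (Icc (0:ℝ) T)).toReal = T := by
        rw [Real.volume_Icc, sub_zero, ENNReal.toReal_ofReal (by linarith)]
      have hvolA_le : (volume A).toReal ≤ T := by
        rw [← hvolIcc]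
        exact ENNReal.toReal_mono (by rw [Real.volume_Icc]; exact ENNReal.ofReal_ne_top)
          (measure_mono hAsubIcc)
      rcases le_or_gt T Tε with hTTε | hTTε
      · have h1 : (volume A).toReal ≤ Tε := le_trans hvolA_le hTTε
        have h2 : 0 ≤ (|Cδ| + G * Tε) / c := by positivity
        nlinarith
      · -- main case : T > Tε
        set A' : Set ℝ := A ∩ Ioc Tε T with hA'def
        have hA'meas : MeasurableSet A' := hAmeas.inter measurableSet_Ioc
        have hA'subIoc : A' ⊆ Ioc Tε T := fun s hs => hs.2
        have hIocfin : volume (Ioc Tε T) ≠ ⊤ := by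
          rw [Real.volume_Ioc]; exact ENNReal.ofReal_ne_top
        have hA'fin : volume A' ≠ ⊤ := ne_top_of_le_ne_top hIocfin (measure_mono hA'subIoc)
        have hsplitA : (volume A).toReal ≤ (volume A').toReal + Tε := by
          have hsub : A ⊆ A' ∪ Icc 0 Tε := by
            intro s hs
            rcases le_or_gt s Tε with h | h
            · exact Or.inr ⟨hs.1.1, h⟩
            · exact Or.inl ⟨hs, h, hs.1.2⟩
          have h1 : volume A ≤ volume A' + volume (Icc 0 Tε) :=
            le_trans (measure_mono hsub) (measure_union_le _ _)
          have h2 : volume (Icc (0:ℝ) Tε) = ENNReal.ofReal Tε := by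
            rw [Real.volume_Icc, sub_zero]
          rw [h2] at h1
          calc (volume A).toReal ≤ (volume A' + ENNReal.ofReal Tε).toReal :=
                ENNReal.toReal_mono (by
                  refine ENNReal.add_ne_top.mpr ⟨hA'fin, ENNReal.ofReal_ne_top⟩) h1
            _ = (volume A').toReal + Tε := by
                rw [ENNReal.toReal_add hA'fin ENNReal.ofReal_ne_top,
                  ENNReal.toReal_ofReal hTε0]
        -- integral estimates
        have hint1 : -(G * Tε) ≤ ∫ s in (0:ℝ)..Tε, M.g (Xc s) 𝔔 := by
          have hmono := intervalIntegral.integral_mono_on (μ := volume) hTε0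
            (intervalIntegrable_const (c := -G)) (hφcont.intervalIntegrable 0 Tε)
            (fun s hs => by
              have := abs_le.mp (hG 𝔔 (Xc s) (hXcmem s))
              linarith [this.1])
          rw [intervalIntegral.integral_const, sub_zero, smul_eq_mul] at hmono
          calc -(G * Tε) = Tε * (-G) := by ring
            _ ≤ _ := hmono
        have hIntOn : IntegrableOn (fun s => M.g (Xc s) 𝔔) (Ioc Tε T) :=
          (intervalIntegrable_iff_integrableOn_Ioc_of_le hTTε.le).mp
            (hφcont.intervalIntegrable Tε T)
        have hint2 : c * (volume A').toReal - (L + 1) * εb * T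
            ≤ ∫ s in Set.Ioc Tε T, M.g (Xc s) 𝔔 := by
          have hunion : A' ∪ (Ioc Tε T \ A') = Ioc Tε T := union_diff_cancel hA'subIoc
          have hdisj : Disjoint A' (Ioc Tε T \ A') := disjoint_sdiff_self_right
          have hIA' : IntegrableOn (fun s => M.g (Xc s) 𝔔) A' := hIntOn.mono_set hA'subIoc
          have hID : IntegrableOn (fun s => M.g (Xc s) 𝔔) (Ioc Tε T \ A') :=
            hIntOn.mono_set diff_subset
          have heq : ∫ s in Set.Ioc Tε T, M.g (Xc s) 𝔔
              = (∫ s in A', M.g (Xc s) 𝔔) + ∫ s in Ioc Tε T \ A', M.g (Xc s) 𝔔 := by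
            rw [← setIntegral_union hdisj (measurableSet_Ioc.diff hA'meas) hIA' hID, hunion]
          have hlow : c * (volume A').toReal ≤ ∫ s in A', M.g (Xc s) 𝔔 := by
            refine setInt_ge_const_vol hA'meas hA'fin hIA' (fun s hs => ?_)
            refine hcmin' (Xc s) ⟨hXc0 s, hs.1.2⟩
          have hhigh : -((L + 1) * εb) * (volume (Ioc Tε T \ A')).toReal
              ≤ ∫ s in Ioc Tε T \ A', M.g (Xc s) 𝔔 := by
            refine setInt_ge_const_vol (measurableSet_Ioc.diff hA'meas)
              (ne_top_of_le_ne_top hIocfin (measure_mono diff_subset)) hID (fun s hs => ?_)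
            have hsIoc : s ∈ Ioc Tε T := hs.1
            have hs0 : (0:ℝ) ≤ s := le_trans hTε0 hsIoc.1.le
            have hnotA : ¬ (Xc s ≤ K - η) := by
              intro hXcs
              exact hs.2 ⟨⟨⟨hs0, hsIoc.2⟩, hXcs⟩, hsIoc⟩
            push_neg at hnotA
            have hub : Xc s ≤ K + εb := by
              rw [hXceq s hs0]
              exact hTε s hsIoc.1.le
            rcases le_or_gt (Xc s) K with hle | hlt
            · -- growth rate nonnegative
              have h1 : 1 ≤ M.R (Xc s) 𝔔 := by
                rw [← hRK]
                exact M.R_anti hϖ hϖ₂ 𝔔 (X := Xc s) (Y := K) (hXc0 s) hle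
              have := M.g_nonneg hϖ hϖ₂ (hXc0 s) h1
              nlinarith [mul_pos (by linarith : (0:ℝ) < L + 1) hεb]
            · -- Lipschitz estimate around K
              have h1 := hLip 𝔔 (Xc s) (hXcmem' s) K hKmem
              have h2 : M.g K 𝔔 = 0 := M.g_eq_zero hϖ hϖ₂ hK0 hRK
              rw [h2, sub_zero] at h1
              have h3 : |Xc s - K| ≤ εb := by
                rw [abs_of_nonneg (by linarith)]
                linarith
              have h4 := abs_le.mp h1
              have h5 : L * |Xc s - K| ≤ L * εb := mul_le_mul_of_nonneg_left h3 hL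
              nlinarith [abs_nonneg (Xc s - K), hεb.le]
          have hvol_le : (volume (Ioc Tε T \ A')).toReal ≤ T - Tε := by
            have h1 : volume (Ioc Tε T \ A') ≤ volume (Ioc Tε T) := measure_mono diff_subset
            have h2 : (volume (Ioc Tε T)).toReal = T - Tε := by
              rw [Real.volume_Ioc, ENNReal.toReal_ofReal (by linarith)]
            rw [← h2]
            exact ENNReal.toReal_mono hIocfin h1
          have hcoef : -((L + 1) * εb) * (T - Tε) ≤
              -((L + 1) * εb) * (volume (Ioc Tε T \ A')).toReal := by
            apply mul_le_mul_of_nonpos_left hvol_le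
            have := mul_pos (by linarith : (0:ℝ) < L + 1) hεb
            linarith
          have hfin2 : -((L + 1) * εb) * (T - Tε) ≥ -((L + 1) * εb * T) := by
            have h6 := mul_pos (by linarith : (0:ℝ) < L + 1) hεb
            nlinarith
          rw [heq]
          calc c * (volume A').toReal - (L + 1) * εb * T
              ≤ c * (volume A').toReal + (-((L + 1) * εb) * (T - Tε)) := by nlinarith
            _ ≤ (∫ s in A', M.g (Xc s) 𝔔) + ∫ s in Ioc Tε T \ A', M.g (Xc s) 𝔔 := by
                have := le_trans hcoef hhigh
                exact add_le_add hlow (le_trans hcoef hhigh)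
        have hadj : (∫ s in (0:ℝ)..Tε, M.g (Xc s) 𝔔) + (∫ s in Tε..T, M.g (Xc s) 𝔔)
            = ∫ s in (0:ℝ)..T, M.g (Xc s) 𝔔 :=
          intervalIntegral.integral_add_adjacent_intervals
            (hφcont.intervalIntegrable 0 Tε) (hφcont.intervalIntegrable Tε T)
        have hIoc_eq : (∫ s in Tε..T, M.g (Xc s) 𝔔) = ∫ s in Set.Ioc Tε T, M.g (Xc s) 𝔔 :=
          intervalIntegral.integral_of_le hTTε.le
        have htot := hCδ T hT
        -- combine
        have hcombine : c * (volume A').toReal ≤ δ * T + Cδ + G * Tε + (L + 1) * εb * T := by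
          have h1 : -(G * Tε) + (c * (volume A').toReal - (L + 1) * εb * T)
              ≤ ∫ s in (0:ℝ)..T, M.g (Xc s) 𝔔 := by
            rw [← hadj, hIoc_eq]
            exact add_le_add hint1 hint2
          linarith
        have hsum : (δ + (L + 1) * εb) * T ≤ (θ * c / 2) * T := by
          have h1 : δ + (L + 1) * εb ≤ θ * c / 2 := by
            rw [hδdef]
            linarith
          exact mul_le_mul_of_nonneg_right h1 hT
        have h9 : c * (volume A').toReal ≤ c * ((θ / 2) * T + (Cδ + G * Tε) / c) := by
          rw [mul_add, mul_div_cancel₀ _ hc0.ne']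
          calc c * (volume A').toReal ≤ δ * T + Cδ + G * Tε + (L + 1) * εb * T := hcombine
            _ = (δ + (L + 1) * εb) * T + (Cδ + G * Tε) := by ring
            _ ≤ (θ * c / 2) * T + (Cδ + G * Tε) := by linarith
            _ = c * (θ / 2 * T) + (Cδ + G * Tε) := by ring
        have hvolA' : (volume A').toReal ≤ (θ / 2) * T + (Cδ + G * Tε) / c :=
          le_of_mul_le_mul_left h9 hc0
        have hCabs : (Cδ + G * Tε) / c ≤ (|Cδ| + G * Tε) / c := by
          gcongr
          · exact le_abs_self _
        calc (volume A).toReal ≤ (volume A').toReal + Tε := hsplitA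
          _ ≤ (θ / 2) * T + (Cδ + G * Tε) / c + Tε := by linarith
          _ ≤ θ * T + ((|Cδ| + G * Tε) / c + Tε) := by nlinarith
    -- V5: concentration: mass of closed sets avoiding 𝔔 vanishes
    have conc : ∀ C : Set Q, IsClosed C → 𝔔 ∉ C → Tendsto (setMass μ C) atTop (nhds 0) := by
      intro C hCclosed hCout
      rcases C.eq_empty_or_nonempty with rfl | hCne
      · have hzero : setMass μ (∅ : Set Q) = fun _ => (0:ℝ) := by
          funext t; simp [setMass]
        rw [hzero]
        exact tendsto_const_nhds
      have hCcomp : IsCompact C := hCclosed.isCompact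
      have hCmeas : MeasurableSet C := hCclosed.measurableSet
      have hrcont : Continuous fun q : Q => M.R 0 q := by
        refine (M.f₁_cont 0).div (M.f₂_cont 0) (fun q => ?_)
        exact ne_of_gt (lt_of_lt_of_le hϖ (hϖ₂ q))
      obtain ⟨qC, hqCC, hqCmax⟩ := hCcomp.exists_isMaxOn hCne hrcont.continuousOn
      have hqlt : M.R 0 qC < M.R 0 𝔔 := by
        rcases lt_or_eq_of_le (hA1 qC) with h | h
        · exact h
        · exfalso
          have hmem : qC ∈ M.fittestClass 𝔔 := h
          rw [hunique, mem_singleton_iff] at hmem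
          rw [hmem] at hqCC
          exact hCout hqCC
      have hRKqC : M.R K qC < 1 := by
        rw [← hRK]
        exact (hA4 𝔔 qC K hK0).1 hqlt
      set ω : ℝ := (1 - M.R K qC) / 2 with hω
      have hω0 : 0 < ω := by rw [hω]; linarith
      have hRKqC' : M.R K qC = 1 - 2 * ω := by rw [hω]; ring
      -- continuity of R(·,qC) on [0,CC] gives a margin below K
      have hsubCC : Icc (0:ℝ) CC ⊆ Icc (-CC) CC := fun y hy => ⟨by linarith [hy.1], hy.2⟩
      have hRcont : ContinuousOn (fun Y => M.R Y qC) (Icc (0:ℝ) CC) := by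
        refine ContinuousOn.div ((M.f₁_contX qC CC).mono hsubCC)
          ((M.f₂_contX qC CC).mono hsubCC) (fun Y hY => ?_)
        exact ne_of_gt (M.f₂_pos hϖ hϖ₂ hY.1 qC)
      have hKCC : K ∈ Icc (0:ℝ) CC := ⟨hK0, by linarith⟩
      obtain ⟨δ', hδ'0, hδ'⟩ := Metric.continuousWithinAt_iff.mp (hRcont K hKCC) ω hω0
      set η' : ℝ := min (δ' / 2) (K / 2) with hη'
      have hη'0 : 0 < η' := lt_min (by linarith) (by linarith)
      have hη'K : η' < K := lt_of_le_of_lt (min_le_right _ _) (by linarith)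
      have hRXqC : ∀ Y, K - η' ≤ Y → Y ≤ CC → M.R Y qC ≤ 1 - ω := by
        intro Y h1 h2
        have hY0 : 0 ≤ Y := by linarith
        have hKη'0 : (0:ℝ) ≤ K - η' := by linarith
        have ha := M.R_anti hϖ hϖ₂ qC (X := K - η') (Y := Y) hKη'0 h1
        have hmem : K - η' ∈ Icc (0:ℝ) CC := ⟨hKη'0, by linarith⟩
        have hdist : dist (K - η') K < δ' := by
          rw [Real.dist_eq]
          have : |K - η' - K| = η' := by
            rw [show K - η' - K = -η' by ring, abs_neg, abs_of_pos hη'0]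
          rw [this]
          exact lt_of_le_of_lt (min_le_left _ _) (by linarith)
        have hd2 := hδ' hmem hdist
        rw [Real.dist_eq] at hd2
        have := abs_le.mp hd2.le
        have h3 : M.R (K - η') qC ≤ M.R K qC + ω := by linarith [this.2]
        rw [hRKqC'] at h3
        linarith
      have hgC : ∀ q ∈ C, ∀ Y, K - η' ≤ Y → Y ≤ CC → M.g Y q ≤ -(ω * ϖ) := by
        intro q hq Y h1 h2
        have hY0 : 0 ≤ Y := by linarith
        have hRq : M.R Y q ≤ M.R Y qC := by
          have hle : M.R 0 q ≤ M.R 0 qC := hqCmax hq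
          rcases lt_or_eq_of_le hle with h | h
          · exact ((hA4 qC q Y hY0).1 h).le
          · exact ((hA4 qC q Y hY0).2 h.symm).ge
        exact M.g_le_neg hϖ hϖ₂ hY0 hω0.le (le_trans hRq (hRXqC Y h1 h2))
      obtain ⟨hCf, hhC1, hhC2, hhC3⟩ := M.hsup_spec hCcomp hCne
      set β : ℝ → ℝ := fun s => hCf (Xc s) with hβ
      have hβcont : Continuous β :=
        cont_comp_lip hL (hhC3 CC L hLip) hXccont hXcmem'
      have hβleG : ∀ s, β s ≤ G := fun s =>
        hhC2 (Xc s) G (fun q _ => (abs_le.mp (hG q (Xc s) (hXcmem s))).2)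
      have hβhi : ∀ s, K - η' ≤ Xc s → β s ≤ -(ω * ϖ) := fun s h =>
        hhC2 (Xc s) _ (fun q hq => hgC q hq (Xc s) h (hXcmem s).2)
      have hderC : ∀ t, t ∈ Ici (0:ℝ) →
          (∫ q in C, M.g (X t) q ∂(μ t)) ≤ β t * setMass μ C t := by
        intro t ht
        have := hfinmeas t
        have h1 := setInt_le_of_bound (ν := μ t) (M.g_contq (X t)) hCmeas
          (c := hCf (X t)) (fun q hq => hhC1 (X t) q hq)
        have h2 : β t = hCf (X t) := by
          simp only [hβ]
          rw [hXceq t ht]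
        rw [h2]
        exact h1
      set a : ℝ := ω * ϖ with ha
      have ha0 : 0 < a := mul_pos hω0 hϖ
      set θ : ℝ := a / (2 * (G + a)) with hθdef
      have hGa : 0 < G + a := by linarith
      have hθ0 : 0 < θ := by rw [hθdef]; positivity
      obtain ⟨Cθ, hCθ⟩ := lowtime η' hη'0 hη'K θ hθ0
      have hθmul : (G + a) * θ = a / 2 := by
        rw [hθdef]
        field_simp
      have hintβ : ∀ T, 0 ≤ T →
          (∫ s in (0:ℝ)..T, β s) ≤ -(a / 2) * T + (G + a) * |Cθ| := by
        intro T hT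
        set A : Set ℝ := {s : ℝ | s ∈ Icc (0:ℝ) T ∧ Xc s ≤ K - η'} with hAdef
        have hAclosed : IsClosed A := by
          have : A = Icc (0:ℝ) T ∩ Xc ⁻¹' (Iic (K - η')) := rfl
          rw [this]
          exact isClosed_Icc.inter (isClosed_Iic.preimage hXccont)
        have hAmeas : MeasurableSet A := hAclosed.measurableSet
        have hAsub : A ⊆ Icc 0 T := fun s hs => hs.1
        have hAfin : volume A ≠ ⊤ := by
          refine ne_top_of_le_ne_top ?_ (measure_mono hAsub)
          rw [Real.volume_Icc]
          exact ENNReal.ofReal_ne_top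
        have hIocfin : volume (Ioc (0:ℝ) T) ≠ ⊤ := by
          rw [Real.volume_Ioc]; exact ENNReal.ofReal_ne_top
        set ψ : ℝ → ℝ := fun s => (G + a) * A.indicator (fun _ => (1:ℝ)) s - a with hψ
        have hψint : IntegrableOn ψ (Ioc 0 T) := by
          refine Integrable.sub ?_ ((integrableOn_const_iff).mpr (Or.inr
            (lt_top_iff_ne_top.mpr hIocfin)))
          refine Integrable.const_mul ?_ _
          rw [integrable_indicator_iff hAmeas]
          refine (integrableOn_const_iff).mpr (Or.inr ?_)
          exact lt_of_le_of_lt (Measure.restrict_apply_le _ _)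
            (lt_top_iff_ne_top.mpr hAfin)
        have hβψ : ∀ s ∈ Ioc (0:ℝ) T, β s ≤ ψ s := by
          intro s hs
          simp only [hψ]
          by_cases hsA : s ∈ A
          · rw [indicator_of_mem hsA]
            have := hβleG s
            linarith
          · rw [indicator_of_notMem hsA, mul_zero, zero_sub]
            have hnot : ¬ (Xc s ≤ K - η') := by
              intro hcon
              exact hsA ⟨⟨hs.1.le, hs.2⟩, hcon⟩
            push_neg at hnot
            exact hβhi s hnot.le
        have hβIoc : IntegrableOn β (Ioc 0 T) :=
          (intervalIntegrable_iff_integrableOn_Ioc_of_le hT).mp (hβcont.intervalIntegrable 0 T)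
        have hmono := setIntegral_mono_on hβIoc hψint measurableSet_Ioc hβψ
        have hψval : ∫ s in Ioc (0:ℝ) T, ψ s
            = (G + a) * (volume (Ioc (0:ℝ) T ∩ A)).toReal - a * T := by
          simp only [hψ]
          rw [integral_sub ((Integrable.const_mul (?ind : Integrable (A.indicator fun _ => (1:ℝ)) (volume.restrict (Ioc (0:ℝ) T))) (G + a))) ((integrableOn_const_iff (C := a)).mpr (Or.inr
            (lt_top_iff_ne_top.mpr hIocfin)))]
          case ind =>
            rw [integrable_indicator_iff hAmeas]
            refine (integrableOn_const_iff).mpr (Or.inr ?_)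
            exact lt_of_le_of_lt (Measure.restrict_apply_le _ _)
              (lt_top_iff_ne_top.mpr hAfin)
          rw [integral_const_mul, setIntegral_indicator hAmeas, setIntegral_const, smul_eq_mul,
            mul_one, setIntegral_const, smul_eq_mul]
          rw [Real.volume_real_Ioc_of_le hT, sub_zero, measureReal_def]
          ring
        have hvol2 : (volume (Ioc (0:ℝ) T ∩ A)).toReal ≤ θ * T + Cθ := by
          refine le_trans ?_ (hCθ T hT)
          exact ENNReal.toReal_mono hAfin (measure_mono inter_subset_right)
        have hintval : (∫ s in (0:ℝ)..T, β s) = ∫ s in Ioc (0:ℝ) T, β s :=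
          intervalIntegral.integral_of_le hT
        rw [hintval]
        calc ∫ s in Ioc (0:ℝ) T, β s ≤ ∫ s in Ioc (0:ℝ) T, ψ s := hmono
          _ = (G + a) * (volume (Ioc (0:ℝ) T ∩ A)).toReal - a * T := hψval
          _ ≤ (G + a) * (θ * T + Cθ) - a * T := by
              have := mul_le_mul_of_nonneg_left hvol2 hGa.le
              linarith
          _ = (G + a) * θ * T + (G + a) * Cθ - a * T := by ring
          _ ≤ -(a / 2) * T + (G + a) * |Cθ| := by
              rw [hθmul]
              have h5 : (G + a) * Cθ ≤ (G + a) * |Cθ| :=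
                mul_le_mul_of_nonneg_left (le_abs_self _) hGa.le
              nlinarith
      have hgr : ∀ T, 0 ≤ T → setMass μ C T ≤
          (setMass μ C 0 * Real.exp ((G + a) * |Cθ|)) * Real.exp (-(a / 2) * T) := by
        intro T hT
        have h1 := gronwall_up (f := setMass μ C)
          (f' := fun t => ∫ q in C, M.g (X t) q ∂(μ t))
          (setMass_hasDeriv μ hμ hCmeas) hβcont (le_refl (0:ℝ)) hT
          (fun t ht => hderC t ht.1)
        refine le_trans h1 ?_
        rw [mul_assoc, ← Real.exp_add]
        refine mul_le_mul_of_nonneg_left ?_ (setMass_nonneg μ C 0)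
        rw [Real.exp_le_exp]
        have := hintβ T hT
        linarith
      -- squeeze to zero
      have hlin : Tendsto (fun T : ℝ => -(a / 2) * T) atTop atBot := by
        have h1 : -(a / 2) < 0 := by linarith
        exact tendsto_id.const_mul_atTop_of_neg h1
      have hexp : Tendsto (fun T : ℝ =>
          (setMass μ C 0 * Real.exp ((G + a) * |Cθ|)) * Real.exp (-(a / 2) * T))
          atTop (nhds 0) := by
        have h2 : Tendsto (fun T : ℝ => Real.exp (-(a / 2) * T)) atTop (nhds 0) :=
          Real.tendsto_exp_atBot.comp hlin
        have h3 := h2.const_mul (setMass μ C 0 * Real.exp ((G + a) * |Cθ|))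
        simpa using h3
      refine tendsto_of_tendsto_of_tendsto_of_le_of_le' tendsto_const_nhds hexp ?_ ?_
      · filter_upwards [eventually_ge_atTop (0:ℝ)] with T hT
        exact setMass_nonneg μ C T
      · filter_upwards [eventually_ge_atTop (0:ℝ)] with T hT
        exact hgr T hT
    -- V6: the total mass converges to K
    have masslim : Tendsto X atTop (nhds K) := by
      rw [Metric.tendsto_atTop]
      intro ε hε
      obtain ⟨Tu, hTu0, hTu⟩ := claimB (ε / 2) (by linarith)
      set η : ℝ := min (ε / 4) (K / 4) with hηdef
      have hη0 : 0 < η := lt_min (by linarith) (by linarith)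
      have hηε : η ≤ ε / 4 := min_le_left _ _
      have hηK4 : η ≤ K / 4 := min_le_right _ _
      have hηK : η < K := by linarith
      obtain ⟨c, hc0, hc'⟩ := hcmin η hη0 hηK
      obtain ⟨ρ, hρ0, hρ'⟩ := M.g_unif 𝔔 CC hCC0 (d := c / 2) (by linarith)
      set U : Set Q := Metric.ball 𝔔 ρ with hUdef
      have hUmeas : MeasurableSet U := Metric.isOpen_ball.measurableSet
      set Cs : Set Q := Uᶜ with hCs
      have hCsclosed : IsClosed Cs := isClosed_compl_iff.mpr Metric.isOpen_ball
      have h𝔔Cs : 𝔔 ∉ Cs := fun h => h (Metric.mem_ball_self hρ0)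
      have hκ := conc Cs hCsclosed h𝔔Cs
      rw [Metric.tendsto_atTop] at hκ
      obtain ⟨T₁', hT₁'⟩ := hκ η hη0
      set T₁ : ℝ := max T₁' 0 with hT₁def
      have hT₁0 : 0 ≤ T₁ := le_max_right _ _
      have hκb : ∀ t, T₁ ≤ t → setMass μ Cs t ≤ η := by
        intro t ht
        have := hT₁' t (le_trans (le_max_left _ _) ht)
        rw [Real.dist_eq, sub_zero, abs_of_nonneg (setMass_nonneg μ Cs t)] at this
        exact this.le
      set u : ℝ → ℝ := setMass μ U with hu
      have hud := setMass_hasDeriv μ hμ hUmeas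
      have hu_pos : ∀ t, 0 ≤ t → 0 < u t := fun t ht => hball ρ hρ0 t ht
      have hu_le : ∀ t, u t ≤ X t := fun t => setMass_le_totalMass μ hμ U t
      have hu_lb : ∀ t, 0 ≤ t → X t ≤ K - η →
          (c / 2) * u t ≤ ∫ q in U, M.g (X t) q ∂(μ t) := by
        intro t ht hXt
        have := hfinmeas t
        refine setInt_ge_of_bound (M.g_contq (X t)) hUmeas (fun q hq => ?_)
        have h1 := hρ' q (Metric.mem_ball.mp hq) (X t) (hXcc t ht)
        have h2 := hc' (X t) ⟨hX0 t, hXt⟩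
        have := abs_le.mp h1
        linarith [this.1]
      have hsum : ∀ t, u t + setMass μ Cs t = X t :=
        fun t => setMass_add_compl μ hμ hUmeas t
      -- step i : at some time past T₁ the ball mass reaches K - 2η
      have hstep1 : ∃ t₂, T₁ ≤ t₂ ∧ K - 2 * η ≤ u t₂ := by
        by_contra hcon
        push_neg at hcon
        have hXlow : ∀ t, T₁ ≤ t → X t ≤ K - η := by
          intro t ht
          have h1 := hcon t ht
          have h2 := hκb t ht
          have h3 := hsum t
          linarith
        set D : ℝ := u T₁ with hD
        have hD0 : 0 < D := hu_pos T₁ hT₁0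
        have hDB : D ≤ B := le_trans (hu_le T₁) (hXB T₁ hT₁0)
        have hBD1 : 1 ≤ B / D := (one_le_div hD0).mpr hDB
        have hlog0 : 0 ≤ Real.log (B / D) := Real.log_nonneg hBD1
        set T : ℝ := T₁ + (2 / c) * (Real.log (B / D) + 1) with hT
        have hT₁T : T₁ ≤ T := by
          rw [hT]
          have : 0 ≤ (2 / c) * (Real.log (B / D) + 1) := by positivity
          linarith
        have hder2 : ∀ t, t ∈ Icc T₁ T → (c / 2) * u t ≤ ∫ q in U, M.g (X t) q ∂(μ t) :=
          fun t ht => hu_lb t (le_trans hT₁0 ht.1) (hXlow t ht.1)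
        have hlo := gronwall_lo (f := u)
          (f' := fun t => ∫ q in U, M.g (X t) q ∂(μ t))
          (β := fun _ => c / 2) hud continuous_const hT₁0 hT₁T hder2
        have hI : (∫ s in T₁..T, (c / 2 : ℝ)) = Real.log (B / D) + 1 := by
          rw [intervalIntegral.integral_const, smul_eq_mul, hT]
          field_simp
          ring
        rw [hI] at hlo
        have hexp : Real.exp (Real.log (B / D) + 1) = (B / D) * Real.exp 1 := by
          rw [Real.exp_add, Real.exp_log (by positivity)]
        rw [hexp] at hlo
        have hBe : D * ((B / D) * Real.exp 1) = B * Real.exp 1 := by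
          field_simp
        rw [hBe] at hlo
        have he1 : (2:ℝ) ≤ Real.exp 1 := by
          have := Real.add_one_le_exp (1:ℝ)
          linarith
        have hcontra : u T ≤ B := le_trans (hu_le T) (hXB T (le_trans hT₁0 hT₁T))
        nlinarith
      obtain ⟨t₂, ht₂T₁, ht₂⟩ := hstep1
      have ht₂0 : 0 ≤ t₂ := le_trans hT₁0 ht₂T₁
      -- step ii : lower barrier
      have hbar := bar_lo (f := u)
        (f' := fun t => ∫ q in U, M.g (X t) q ∂(μ t)) hud ht₂0 (b := K - 2 * η)
        (fun t ht hut => ?_) -- filled below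
      rotate_left
      · -- derivative nonneg when u < K - 2η
        have ht0 : 0 ≤ t := le_trans ht₂0 ht
        have hXt : X t ≤ K - η := by
          have h2 := hκb t (le_trans ht₂T₁ ht)
          have h3 := hsum t
          linarith
        have h4 := hu_lb t ht0 hXt
        have h5 := (hu_pos t ht0).le
        nlinarith
      · -- combine upper and lower bounds
        refine ⟨max Tu t₂, fun t ht => ?_⟩
        have htu : Tu ≤ t := le_trans (le_max_left _ _) ht
        have htt₂ : t₂ ≤ t := le_trans (le_max_right _ _) ht
        have hup : X t ≤ K + ε / 2 := hTu t htu
        have hlow : K - 2 * η ≤ u t := by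
          have := hbar t htt₂
          rw [min_eq_right ht₂] at this
          exact this
        have hXlow : K - 2 * η ≤ X t := le_trans hlow (hu_le t)
        rw [Real.dist_eq, abs_lt]
        constructor <;> linarith
    -- V7: conclusion
    rw [Metric.tendsto_atTop]
    intro ε hε
    set D : ℝ := B + 2 * Mf + |f 𝔔| + 1 with hD
    have hD0 : 0 < D := by positivity
    set ε' : ℝ := ε / (2 * D) with hε'
    have hε'0 : 0 < ε' := by positivity
    obtain ⟨ρf, hρf0, hρf⟩ := Metric.continuousAt_iff.mp (hf.continuousAt (x := 𝔔)) ε' hε'0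
    set Uf : Set Q := Metric.ball 𝔔 ρf with hUf
    have hUfmeas : MeasurableSet Uf := Metric.isOpen_ball.measurableSet
    set Cf : Set Q := Ufᶜ with hCf
    have hCfclosed : IsClosed Cf := isClosed_compl_iff.mpr Metric.isOpen_ball
    have h𝔔Cf : 𝔔 ∉ Cf := fun h => h (Metric.mem_ball_self hρf0)
    have hκf := conc Cf hCfclosed h𝔔Cf
    rw [Metric.tendsto_atTop] at hκf
    obtain ⟨Tf', hTf'⟩ := hκf ε' hε'0
    rw [Metric.tendsto_atTop] at masslim
    obtain ⟨Tm', hTm'⟩ := masslim ε' hε'0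
    refine ⟨max (max Tf' Tm') 0, fun t ht => ?_⟩
    have ht0 : (0:ℝ) ≤ t := le_trans (le_max_right _ _) ht
    have htf : Tf' ≤ t := le_trans (le_trans (le_max_left _ _) (le_max_left _ _)) ht
    have htm : Tm' ≤ t := le_trans (le_trans (le_max_right _ _) (le_max_left _ _)) ht
    have hfint : Integrable f (μ t) := by
      have := hfinmeas t
      exact integrable_of_cont hf
    have hgsub : Integrable (fun q => f q - f 𝔔) (μ t) := hfint.sub (integrable_const _)
    have hdecomp : (∫ q, f q ∂(μ t)) - K * f 𝔔
        = (∫ q in Uf, (f q - f 𝔔) ∂(μ t)) + (∫ q in Cf, (f q - f 𝔔) ∂(μ t))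
          + f 𝔔 * (X t - K) := by
      have h1 : (∫ q in Uf, (f q - f 𝔔) ∂(μ t)) + (∫ q in Cf, (f q - f 𝔔) ∂(μ t))
          = ∫ q, (f q - f 𝔔) ∂(μ t) := integral_add_compl hUfmeas hgsub
      have h2 : (∫ q, (f q - f 𝔔) ∂(μ t)) = (∫ q, f q ∂(μ t)) - f 𝔔 * X t := by
        rw [integral_sub hfint (integrable_const _), integral_const, smul_eq_mul]
        have : (μ t).real Set.univ = X t := rfl
        rw [this, mul_comm]
      rw [h1, h2]
      ring
    have hfinm := hfinmeas t
    -- bound the three pieces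
    have hbd1 : |∫ q in Uf, (f q - f 𝔔) ∂(μ t)| ≤ ε' * B := by
      have hsub : Continuous fun q => f q - f 𝔔 := hf.sub continuous_const
      have hle : ∫ q in Uf, (f q - f 𝔔) ∂(μ t) ≤ ε' * (μ t Uf).toReal :=
        setInt_le_of_bound hsub hUfmeas (fun q hq => by
          have := hρf (Metric.mem_ball.mp hq)
          rw [Real.dist_eq] at this
          linarith [(abs_le.mp this.le).2])
      have hge : -ε' * (μ t Uf).toReal ≤ ∫ q in Uf, (f q - f 𝔔) ∂(μ t) :=
        setInt_ge_of_bound hsub hUfmeas (fun q hq => by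
          have := hρf (Metric.mem_ball.mp hq)
          rw [Real.dist_eq] at this
          linarith [(abs_le.mp this.le).1])
      have hmB : (μ t Uf).toReal ≤ B := le_trans (setMass_le_totalMass μ hμ Uf t) (hXB t ht0)
      have hm0 : 0 ≤ (μ t Uf).toReal := ENNReal.toReal_nonneg
      rw [abs_le]
      constructor
      · nlinarith
      · nlinarith
    have hbd2 : |∫ q in Cf, (f q - f 𝔔) ∂(μ t)| ≤ 2 * Mf * ε' := by
      have hsub : Continuous fun q => f q - f 𝔔 := hf.sub continuous_const
      have hbnd : ∀ q : Q, |f q - f 𝔔| ≤ 2 * Mf := by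
        intro q
        have h1 := hMf q
        have h2 := hMf 𝔔
        have := abs_sub (f q) (f 𝔔)
        calc |f q - f 𝔔| ≤ |f q| + |f 𝔔| := abs_sub _ _
          _ ≤ 2 * Mf := by linarith
      have hle : ∫ q in Cf, (f q - f 𝔔) ∂(μ t) ≤ (2 * Mf) * (μ t Cf).toReal :=
        setInt_le_of_bound hsub hCfclosed.measurableSet
          (fun q _ => (abs_le.mp (hbnd q)).2)
      have hge : -(2 * Mf) * (μ t Cf).toReal ≤ ∫ q in Cf, (f q - f 𝔔) ∂(μ t) :=
        setInt_ge_of_bound hsub hCfclosed.measurableSet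
          (fun q _ => (abs_le.mp (hbnd q)).1)
      have hmC : (μ t Cf).toReal ≤ ε' := by
        have := hTf' t htf
        rw [Real.dist_eq, sub_zero, abs_of_nonneg (setMass_nonneg μ Cf t)] at this
        exact this.le
      have hm0 : 0 ≤ (μ t Cf).toReal := ENNReal.toReal_nonneg
      rw [abs_le]
      constructor
      · nlinarith
      · nlinarith
    have hbd3 : |f 𝔔 * (X t - K)| ≤ |f 𝔔| * ε' := by
      rw [abs_mul]
      refine mul_le_mul_of_nonneg_left ?_ (abs_nonneg _)
      have := hTm' t htm
      rw [Real.dist_eq] at this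
      exact this.le
    rw [Real.dist_eq]
    calc |(∫ q, f q ∂(μ t)) - K * f 𝔔|
        = |(∫ q in Uf, (f q - f 𝔔) ∂(μ t)) + (∫ q in Cf, (f q - f 𝔔) ∂(μ t))
            + f 𝔔 * (X t - K)| := by rw [hdecomp]
      _ ≤ |(∫ q in Uf, (f q - f 𝔔) ∂(μ t)) + (∫ q in Cf, (f q - f 𝔔) ∂(μ t))|
            + |f 𝔔 * (X t - K)| := abs_add_le _ _
      _ ≤ |∫ q in Uf, (f q - f 𝔔) ∂(μ t)| + |∫ q in Cf, (f q - f 𝔔) ∂(μ t)|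
            + |f 𝔔 * (X t - K)| := by
            have := abs_add_le (∫ q in Uf, (f q - f 𝔔) ∂(μ t)) (∫ q in Cf, (f q - f 𝔔) ∂(μ t))
            linarith
      _ ≤ ε' * B + 2 * Mf * ε' + |f 𝔔| * ε' := by linarith
      _ = ε' * (B + 2 * Mf + |f 𝔔|) := by ring
      _ < ε := by
          rw [hε', hD]
          rw [div_mul_eq_mul_div, div_lt_iff₀ (by positivity : (0:ℝ) < 2 * (B + 2 * Mf + |f 𝔔| + 1))]
          nlinarith [abs_nonneg (f 𝔔)]


end
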